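/- Let P be a finite poset and e ∈ P. Define t_e^* : C(P) → C(P) by t_e^* := τ_{e_1} ∘ ⋯ ∘ τ_{e_k} ∘ τ_e ∘ τ_{e_1} ∘ ⋯ ∘ τ_{e_k}, where e_1, …, e_k are the elements covered by e, and define τ_e^* : OR(P) → OR(P) by τ_e^* := η_e ∘ t_e ∘ η_e^{-1}, where η_e is the composition of the toggles t_x over a linear extension of {x ∈ P | x < e}. Then OR ∘ t_e^* = t_e ∘ OR and OR ∘ τ_e = τ_e^* ∘ OR as maps C(P) → OR(P). Consequently there is a group isomorphism from the toggle group Tog_C(P) generated by {τ_e | e ∈ P} to the toggle group Tog_OR(P) generated by {t_e | e ∈ P}, given by τ_e ↦ τ_e^*, with inverse t_e ↦ t_e^*. -/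

import Mathlib

open scoped Classical

variable {P : Type*} [PartialOrder P]

/-- Membership in the chain polytope `C(P)`: nonnegative labels whose sum along every
chain is at most 1. -/
def InChainPolytope (P : Type*) [PartialOrder P] (g : P → ℝ) : Prop :=
  (∀ x : P, 0 ≤ g x) ∧ ∀ l : List P, l.Chain' (· < ·) → (l.map g).sum ≤ 1

/-- Membership in the order-reversing polytope `OR(P)`. -/
def InORPolytope (P : Type*) [PartialOrder P] (f : P → ℝ) : Prop :=
  (∀ x : P, 0 ≤ f x ∧ f x ≤ 1) ∧ ∀ ⦃x y : P⦄, x ≤ y → f y ≤ f x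

/-- Membership in the order-preserving polytope `OP(P)`. -/
def InOPPolytope (P : Type*) [PartialOrder P] (f : P → ℝ) : Prop :=
  (∀ x : P, 0 ≤ f x ∧ f x ≤ 1) ∧ ∀ ⦃x y : P⦄, x ≤ y → f x ≤ f y

/-- The poset `P̂`, obtained from `P` by adjoining a minimum `m̂ = ⊥` and a
maximum `M̂ = ⊤`. -/
abbrev PHat (P : Type*) := WithBot (WithTop P)

/-- The inclusion of `P` into `P̂`. -/
def toHat (x : P) : PHat P := ((x : WithTop P) : PHat P)

/-- Extension of an order-reversing labeling to `P̂`, with `f(m̂) = 1`, `f(M̂) = 0`. -/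
noncomputable def hatOR (f : P → ℝ) : PHat P → ℝ := fun y =>
  WithBot.recBotCoe 1 (fun w => WithTop.recTopCoe 0 f w) y

/-- Extension of an order-preserving labeling to `P̂`, with `f(m̂) = 0`, `f(M̂) = 1`. -/
noncomputable def hatOP (f : P → ℝ) : PHat P → ℝ := fun y =>
  WithBot.recBotCoe 0 (fun w => WithTop.recTopCoe 1 f w) y

/-- The saturated chains `x = y_1 ⋖ y_2 ⋖ ⋯ ⋖ y_k` from `x` up to a maximal element. -/
def maxChainsFrom (x : P) : Set (List P) :=
  {l | l.Chain' (· ⋖ ·) ∧ l.head? = some x ∧ ∃ z, l.getLast? = some z ∧ IsMax z}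

/-- The saturated chains `y_1 ⋖ ⋯ ⋖ y_k = x` from a minimal element up to `x`. -/
def maxChainsTo (x : P) : Set (List P) :=
  {l | l.Chain' (· ⋖ ·) ∧ (∃ a, l.head? = some a ∧ IsMin a) ∧ l.getLast? = some x}

/-- The maximal chains of `P` containing `e`. -/
def maxChainsThru (e : P) : Set (List P) :=
  {l | l.Chain' (· ⋖ ·) ∧ (∃ a, l.head? = some a ∧ IsMin a) ∧
    (∃ z, l.getLast? = some z ∧ IsMax z) ∧ e ∈ l}

/-- The transfer map `OR : C(P) → OR(P)`:
`(OR g)(x) = max{ g(y_1) + ⋯ + g(y_k) | x = y_1 ⋖ ⋯ ⋖ y_k, y_k maximal }`. -/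
noncomputable def ORmap (g : P → ℝ) (x : P) : ℝ :=
  sSup ((fun l => (l.map g).sum) '' maxChainsFrom x)

/-- The transfer map `OP : C(P) → OP(P)`:
`(OP g)(x) = max{ g(y_1) + ⋯ + g(y_k) | y_1 ⋖ ⋯ ⋖ y_k = x, y_1 minimal }`. -/
noncomputable def OPmap (g : P → ℝ) (x : P) : ℝ :=
  sSup ((fun l => (l.map g).sum) '' maxChainsTo x)

/-- The inverse transfer map: `(OR⁻¹ f)(x) = f(x) - max{ f(y) | y ⋗ x in P̂ }`. -/
noncomputable def ORinv (f : P → ℝ) (x : P) : ℝ :=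
  f x - sSup {v : ℝ | ∃ y : PHat P, toHat x ⋖ y ∧ v = hatOR f y}

/-- The inverse transfer map: `(OP⁻¹ f)(x) = f(x) - max{ f(y) | y ⋖ x in P̂ }`. -/
noncomputable def OPinv (f : P → ℝ) (x : P) : ℝ :=
  f x - sSup {v : ℝ | ∃ y : PHat P, y ⋖ toHat x ∧ v = hatOP f y}

/-- The piecewise-linear order ideal toggle on the order-reversing polytope:
the label of `e` is replaced by
`max{f(y) | y ⋗ e in P̂} + min{f(y) | y ⋖ e in P̂} - f(e)`. -/
noncomputable def tPL (e : P) (f : P → ℝ) : P → ℝ :=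
  Function.update f e
    (sSup {v : ℝ | ∃ y : PHat P, toHat e ⋖ y ∧ v = hatOR f y}
      + sInf {v : ℝ | ∃ y : PHat P, y ⋖ toHat e ∧ v = hatOR f y} - f e)

/-- The piecewise-linear antichain (chain polytope) toggle: the label of `e` is replaced
by `1 - max{ Σ g(y_i) | (y_1,…,y_k) a maximal chain of P containing e }`. -/
noncomputable def tauPL (e : P) (g : P → ℝ) : P → ℝ :=
  Function.update g e (1 - sSup ((fun l => (l.map g).sum) '' maxChainsThru e))

/-- The indicator function of a subset. -/
noncomputable def ind (S : Set P) : P → ℝ := fun x => if x ∈ S then 1 else 0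

def listComp {α : Type*} (fs : List (α → α)) : α → α := fs.foldr (· ∘ ·) id

theorem hatOR_update_ne {P : Type*} [PartialOrder P] (f : P → ℝ) (e : P) (c : ℝ)
    (y : PHat P) (hy : y ≠ toHat e) :
    hatOR (Function.update f e c) y = hatOR f y := by
  induction y using WithBot.recBotCoe with
  | bot => rfl
  | coe w =>
    induction w using WithTop.recTopCoe with
    | top => rfl
    | coe x =>
      have hx : x ≠ e := by
        intro h
        exact hy (by rw [h]; rfl)
      show hatOR (Function.update f e c) (toHat x) = hatOR f (toHat x)
      simp [hatOR, toHat, Function.update_of_ne hx]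

theorem upperSet_update {P : Type*} [PartialOrder P] (f : P → ℝ) (e : P) (c : ℝ) :
    {v : ℝ | ∃ y : PHat P, toHat e ⋖ y ∧ v = hatOR (Function.update f e c) y}
      = {v : ℝ | ∃ y : PHat P, toHat e ⋖ y ∧ v = hatOR f y} := by
  ext v
  constructor <;> rintro ⟨y, hy, rfl⟩
  · exact ⟨y, hy, hatOR_update_ne f e c y hy.ne'⟩
  · exact ⟨y, hy, (hatOR_update_ne f e c y hy.ne').symm⟩

theorem lowerSet_update {P : Type*} [PartialOrder P] (f : P → ℝ) (e : P) (c : ℝ) :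
    {v : ℝ | ∃ y : PHat P, y ⋖ toHat e ∧ v = hatOR (Function.update f e c) y}
      = {v : ℝ | ∃ y : PHat P, y ⋖ toHat e ∧ v = hatOR f y} := by
  ext v
  constructor <;> rintro ⟨y, hy, rfl⟩
  · exact ⟨y, hy, hatOR_update_ne f e c y hy.ne⟩
  · exact ⟨y, hy, (hatOR_update_ne f e c y hy.ne).symm⟩

theorem tPL_involutive {P : Type*} [PartialOrder P] (e : P) :
    Function.Involutive (tPL (P := P) e) := by
  intro f
  funext x
  rcases eq_or_ne x e with rfl | hx
  · simp only [tPL]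
    rw [Function.update_self]
    rw [upperSet_update, lowerSet_update, Function.update_self]
    ring
  · simp only [tPL]
    rw [Function.update_of_ne hx, Function.update_of_ne hx]

/-- The piecewise-linear order ideal toggle as a permutation of labelings. -/
noncomputable def tPLPerm {P : Type*} [PartialOrder P] (e : P) : Equiv.Perm (P → ℝ) :=
  (tPL_involutive e).toPerm _

/-- `η_S` for labelings: the composition of piecewise-linear order ideal toggles over a
list. -/
noncomputable def etaPLPerm {P : Type*} [PartialOrder P] (l : List P) :
    Equiv.Perm (P → ℝ) := (l.map tPLPerm).prod

/-- The chain polytope, as a subtype. -/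
abbrev CPSub (P : Type*) [PartialOrder P] : Type _ := {g : P → ℝ // InChainPolytope P g}

/-- The order-reversing polytope, as a subtype. -/
abbrev ORSub (P : Type*) [PartialOrder P] : Type _ := {f : P → ℝ // InORPolytope P f}

/-- The piecewise-linear toggle `t_e : OR(P) → OR(P)`. -/
noncomputable def tORSub {P : Type*} [PartialOrder P] (e : P) (f : ORSub P) : ORSub P :=
  if h : InORPolytope P (tPL e f.1) then ⟨tPL e f.1, h⟩ else f

/-- The piecewise-linear toggle `τ_e : C(P) → C(P)`. -/
noncomputable def tauCSub {P : Type*} [PartialOrder P] (e : P) (g : CPSub P) : CPSub P :=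
  if h : InChainPolytope P (tauPL e g.1) ∧ tauPL e (tauPL e g.1) = g.1
  then ⟨tauPL e g.1, h.1⟩ else g

theorem tORSub_involutive {P : Type*} [PartialOrder P] (e : P) :
    Function.Involutive (tORSub (P := P) e) := by
  intro f
  unfold tORSub
  by_cases h : InORPolytope P (tPL e f.1)
  · rw [dif_pos h]
    have h2 : InORPolytope P (tPL e (⟨tPL e f.1, h⟩ : ORSub P).1) := by
      show InORPolytope P (tPL e (tPL e f.1))
      rw [tPL_involutive e f.1]
      exact f.2
    rw [dif_pos h2]
    exact Subtype.ext (tPL_involutive e f.1)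
  · rw [dif_neg h, dif_neg h]

theorem tauCSub_involutive {P : Type*} [PartialOrder P] (e : P) :
    Function.Involutive (tauCSub (P := P) e) := by
  intro g
  unfold tauCSub
  by_cases h : InChainPolytope P (tauPL e g.1) ∧ tauPL e (tauPL e g.1) = g.1
  · rw [dif_pos h]
    have h2 : InChainPolytope P (tauPL e (⟨tauPL e g.1, h.1⟩ : CPSub P).1) ∧
        tauPL e (tauPL e (⟨tauPL e g.1, h.1⟩ : CPSub P).1)
          = (⟨tauPL e g.1, h.1⟩ : CPSub P).1 := by
      constructor
      · show InChainPolytope P (tauPL e (tauPL e g.1))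
        rw [h.2]
        exact g.2
      · show tauPL e (tauPL e (tauPL e g.1)) = tauPL e g.1
        exact congrArg (tauPL e) h.2
    rw [dif_pos h2]
    exact Subtype.ext h.2
  · rw [dif_neg h, dif_neg h]

/-- The toggle `t_e : OR(P) → OR(P)` as a permutation. -/
noncomputable def tORPerm {P : Type*} [PartialOrder P] (e : P) : Equiv.Perm (ORSub P) :=
  (tORSub_involutive e).toPerm _

/-- The toggle `τ_e : C(P) → C(P)` as a permutation. -/
noncomputable def tauCPerm {P : Type*} [PartialOrder P] (e : P) : Equiv.Perm (CPSub P) :=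
  (tauCSub_involutive e).toPerm _

/-- Composition of toggles `t_x` of `OR(P)` over a list. -/
noncomputable def etaORPerm {P : Type*} [PartialOrder P] (l : List P) :
    Equiv.Perm (ORSub P) := (l.map tORPerm).prod

/-- Composition of toggles `τ_x` of `C(P)` over a list. -/
noncomputable def etaCPerm {P : Type*} [PartialOrder P] (l : List P) :
    Equiv.Perm (CPSub P) := (l.map tauCPerm).prod

/-- A list `l` is a linear extension of the subposet `S`. -/
def IsLinExtListOn {P : Type*} [PartialOrder P] (S : Set P) (l : List P) : Prop :=
  l.Nodup ∧ (∀ x : P, x ∈ l ↔ x ∈ S) ∧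
    ∀ i j : Fin l.length, l.get i < l.get j → (i : ℕ) < (j : ℕ)
/-! ### Auxiliary development -/

section SupAPI

lemma finSup_mem {S : Set ℝ} (hf : S.Finite) (hne : S.Nonempty) : sSup S ∈ S :=
  hne.csSup_mem hf

lemma finInf_mem {S : Set ℝ} (hf : S.Finite) (hne : S.Nonempty) : sInf S ∈ S :=
  hne.csInf_mem hf

lemma le_finSup {S : Set ℝ} (hf : S.Finite) {v : ℝ} (hv : v ∈ S) : v ≤ sSup S :=
  le_csSup hf.bddAbove hv

lemma finInf_le {S : Set ℝ} (hf : S.Finite) {v : ℝ} (hv : v ∈ S) : sInf S ≤ v :=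
  csInf_le hf.bddBelow hv

lemma finSup_image_add {S : Set ℝ} (hf : S.Finite) (hne : S.Nonempty) (a : ℝ) :
    sSup ((fun v => a + v) '' S) = a + sSup S := by
  apply le_antisymm
  · refine csSup_le (hne.image _) ?_
    rintro v ⟨w, hw, rfl⟩
    exact add_le_add_right (le_finSup hf hw) a
  · exact le_finSup (hf.image _) ⟨sSup S, finSup_mem hf hne, rfl⟩

lemma finSup_image_one_sub {S : Set ℝ} (hf : S.Finite) (hne : S.Nonempty) :
    sSup ((fun v => 1 - v) '' S) = 1 - sInf S := by
  apply le_antisymm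
  · refine csSup_le (hne.image _) ?_
    rintro v ⟨w, hw, rfl⟩
    have := finInf_le hf hw
    simp only []
    linarith
  · exact le_finSup (hf.image _) ⟨sInf S, finInf_mem hf hne, rfl⟩

lemma finSup_biUnion {ι : Type*} {I : Set ι} (hI : I.Finite) (hne : I.Nonempty)
    {S : ι → Set ℝ} (hSf : ∀ i ∈ I, (S i).Finite) (hSne : ∀ i ∈ I, (S i).Nonempty) :
    sSup (⋃ i ∈ I, S i) = sSup ((fun i => sSup (S i)) '' I) := by
  obtain ⟨i₀, hi₀⟩ := id hne
  apply le_antisymm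
  · refine csSup_le ?_ ?_
    · obtain ⟨v, hv⟩ := hSne i₀ hi₀
      exact ⟨v, Set.mem_biUnion hi₀ hv⟩
    · intro v hv
      obtain ⟨i, hi, hvi⟩ := Set.mem_iUnion₂.1 hv
      refine le_trans (le_finSup (hSf i hi) hvi) ?_
      exact le_finSup ((hI.image _)) ⟨i, hi, rfl⟩
  · refine csSup_le (hne.image _) ?_
    rintro v ⟨i, hi, rfl⟩
    refine csSup_le_csSup ?_ (hSne i hi) (Set.subset_biUnion_of_mem hi)
    exact (hI.biUnion hSf).bddAbove

lemma finSup_image2_add {A B : Set ℝ} (hAf : A.Finite) (hAne : A.Nonempty)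
    (hBf : B.Finite) (hBne : B.Nonempty) :
    sSup (Set.image2 (fun a b => a + b) A B) = sSup A + sSup B := by
  apply le_antisymm
  · refine csSup_le (hAne.image2 hBne) ?_
    rintro v ⟨a, ha, b, hb, rfl⟩
    exact add_le_add (le_finSup hAf ha) (le_finSup hBf hb)
  · exact le_finSup (hAf.image2 _ hBf)
      (Set.mem_image2_of_mem (finSup_mem hAf hAne) (finSup_mem hBf hBne))

end SupAPI
section Chains
set_option linter.unusedSectionVars false

variable {P : Type*} [PartialOrder P]

lemma chain'_lt_of_covBy {l : List P} (h : l.Chain' (· ⋖ ·)) : l.Chain' (· < ·) :=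
  List.IsChain.imp (fun _ _ hab => hab.1) h

lemma nodup_of_chain'_lt {l : List P} (h : l.Chain' (· < ·)) : l.Nodup :=
  (List.isChain_iff_pairwise.mp h).imp ne_of_lt

lemma eq_cons_head {l : List P} {x : P} (h : l.head? = some x) : l = x :: l.tail := by
  cases l with
  | nil => simp at h
  | cons a t => simp_all

lemma mem_of_head? {l : List P} {x : P} (h : l.head? = some x) : x ∈ l := by
  rw [eq_cons_head h]; exact List.mem_cons_self

lemma mem_of_getLast? {l : List P} {x : P} (h : l.getLast? = some x) : x ∈ l := by
  cases l with
  | nil => simp at h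
  | cons a t =>
    rw [List.getLast?_eq_getLast (List.cons_ne_nil a t)] at h
    exact Option.some_injective _ h ▸ List.getLast_mem _

lemma ne_nil_of_head? {l : List P} {x : P} (h : l.head? = some x) : l ≠ [] := by
  intro hl; rw [hl] at h; simp at h

lemma ne_nil_of_getLast? {l : List P} {x : P} (h : l.getLast? = some x) : l ≠ [] := by
  intro hl; rw [hl] at h; simp at h

lemma le_of_mem_maxChainsFrom {x : P} {l : List P} (hl : l ∈ maxChainsFrom x) {a : P}
    (ha : a ∈ l) : x ≤ a := by
  obtain ⟨hch, hhd, -⟩ := hl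
  have hp := List.isChain_iff_pairwise.mp (chain'_lt_of_covBy hch)
  rw [eq_cons_head hhd] at hp ha
  rcases List.mem_cons.mp ha with rfl | ha
  · exact le_refl _
  · exact ((List.pairwise_cons.mp hp).1 a ha).le

lemma le_of_mem_maxChainsTo {x : P} {l : List P} (hl : l ∈ maxChainsTo x) {a : P}
    (ha : a ∈ l) : a ≤ x := by
  obtain ⟨hch, -, hlast⟩ := hl
  have hp := List.isChain_iff_pairwise.mp (chain'_lt_of_covBy hch)
  have hne : l ≠ [] := ne_nil_of_getLast? hlast
  have hrep := (List.dropLast_append_getLast hne).symm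
  have hx : l.getLast hne = x := by
    have := List.getLast?_eq_getLast hne
    rw [this] at hlast; exact Option.some_injective _ hlast
  rw [hrep, hx] at hp ha
  rcases List.mem_append.mp ha with ha | ha
  · exact ((List.pairwise_append.mp hp).2.2 a ha x (List.mem_singleton_self x)).le
  · rw [List.mem_singleton.mp ha]

lemma maxChainsFrom_finite [Fintype P] (x : P) : (maxChainsFrom x).Finite :=
  (List.finite_length_le P (Fintype.card P)).subset fun _ hl =>
    (nodup_of_chain'_lt (chain'_lt_of_covBy hl.1)).length_le_card

lemma maxChainsTo_finite [Fintype P] (x : P) : (maxChainsTo x).Finite :=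
  (List.finite_length_le P (Fintype.card P)).subset fun _ hl =>
    (nodup_of_chain'_lt (chain'_lt_of_covBy hl.1)).length_le_card

lemma maxChainsThru_finite [Fintype P] (x : P) : (maxChainsThru x).Finite :=
  (List.finite_length_le P (Fintype.card P)).subset fun _ hl =>
    (nodup_of_chain'_lt (chain'_lt_of_covBy hl.1)).length_le_card

lemma exists_covBy_le [Fintype P] {x y : P} (h : x < y) : ∃ z, x ⋖ z ∧ z ≤ y := by
  obtain ⟨m, hm, hmin⟩ := Set.Finite.exists_minimalFor id {z | x < z ∧ z ≤ y}
    (Set.toFinite _) ⟨y, h, le_refl y⟩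
  refine ⟨m, ⟨hm.1, fun c hc hcm => ?_⟩, hm.2⟩
  exact absurd (hmin ⟨hc, hcm.le.trans hm.2⟩ hcm.le) (not_le_of_gt hcm)

lemma exists_le_covBy [Fintype P] {x y : P} (h : x < y) : ∃ z, x ≤ z ∧ z ⋖ y := by
  obtain ⟨m, hm, hmax⟩ := Set.Finite.exists_maximalFor id {z | x ≤ z ∧ z < y}
    (Set.toFinite _) ⟨x, le_refl x, h⟩
  refine ⟨m, hm.1, hm.2, fun c hc hcm => ?_⟩
  exact absurd (hmax ⟨hm.1.trans hc.le, hcm⟩ hc.le) (not_le_of_gt hc)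

lemma exists_covBy_of_not_isMax [Fintype P] {x : P} (h : ¬ IsMax x) : ∃ z, x ⋖ z := by
  obtain ⟨y, hy⟩ := not_isMax_iff.mp h
  obtain ⟨z, hz, -⟩ := exists_covBy_le hy
  exact ⟨z, hz⟩

lemma exists_covBy_of_not_isMin [Fintype P] {x : P} (h : ¬ IsMin x) : ∃ z, z ⋖ x := by
  obtain ⟨y, hy⟩ := not_isMin_iff.mp h
  obtain ⟨z, -, hz⟩ := exists_le_covBy hy
  exact ⟨z, hz⟩

lemma maxChainsFrom_nonempty [Fintype P] (x : P) : (maxChainsFrom x).Nonempty := by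
  refine (IsWellFounded.wf (r := ((· > ·) : P → P → Prop))).induction
    (C := fun x => (maxChainsFrom x).Nonempty) x ?_
  intro x IH
  by_cases hx : IsMax x
  · exact ⟨[x], List.isChain_singleton x, rfl, x, rfl, hx⟩
  · obtain ⟨y, hy⟩ := exists_covBy_of_not_isMax hx
    obtain ⟨l, hch, hhd, z, hlast, hz⟩ := IH y hy.lt
    refine ⟨x :: l, ?_, rfl, z, ?_⟩
    · rw [eq_cons_head hhd] at hch ⊢
      exact List.isChain_cons_cons.mpr ⟨hy, hch⟩
    · have : (x :: l).getLast? = l.getLast? := by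
        rw [show x :: l = [x] ++ l from rfl, List.getLast?_append, hlast]; rfl
      exact ⟨this ▸ hlast, hz⟩

lemma maxChainsTo_nonempty [Fintype P] (x : P) : (maxChainsTo x).Nonempty := by
  refine (IsWellFounded.wf (r := ((· < ·) : P → P → Prop))).induction
    (C := fun x => (maxChainsTo x).Nonempty) x ?_
  intro x IH
  by_cases hx : IsMin x
  · exact ⟨[x], List.isChain_singleton x, ⟨x, rfl, hx⟩, rfl⟩
  · obtain ⟨y, hy⟩ := exists_covBy_of_not_isMin hx
    obtain ⟨l, hch, ⟨a, hhd, ha⟩, hlast⟩ := IH y hy.lt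
    refine ⟨l ++ [x], ?_, ⟨a, ?_, ha⟩, List.getLast?_concat⟩
    · refine List.isChain_append.mpr ⟨hch, List.isChain_singleton x, ?_⟩
      intro b hb c hc
      simp only [List.head?_cons, Option.mem_def, Option.some.injEq] at hc
      rw [hlast] at hb
      simp only [Option.mem_def, Option.some.injEq] at hb
      rw [← hb, ← hc]; exact hy
    · rw [List.head?_append, hhd]; rfl

lemma glue_chain {c₁ c₂ : List P} {m : P} (h₁ : c₁.Chain' (· ⋖ ·)) (h₂ : c₂.Chain' (· ⋖ ·))
    (hl : c₁.getLast? = some m) (hh : c₂.head? = some m) :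
    (c₁ ++ c₂.tail).Chain' (· ⋖ ·) ∧ (c₁ ++ c₂.tail).head? = c₁.head? ∧
      (c₁ ++ c₂.tail).getLast? = c₂.getLast? ∧
      ∀ g : P → ℝ, ((c₁ ++ c₂.tail).map g).sum = (c₁.map g).sum + (c₂.map g).sum - g m := by
  have hc2 := eq_cons_head hh
  have hc1ne : c₁ ≠ [] := ne_nil_of_getLast? hl
  have htl : c₂.tail.Chain' (· ⋖ ·) := by
    rw [hc2] at h₂; exact h₂.tail
  have hrel : ∀ a ∈ c₁.getLast?, ∀ b ∈ c₂.tail.head?, a ⋖ b := by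
    intro a ha b hb
    rw [hl] at ha
    simp only [Option.mem_def, Option.some.injEq] at ha
    rw [hc2] at h₂
    have := (List.isChain_cons.mp h₂).1 b hb
    rw [← ha]; exact this
  refine ⟨List.isChain_append.mpr ⟨h₁, htl, hrel⟩, ?_, ?_, ?_⟩
  · rw [List.head?_append, eq_cons_head hh]
    obtain ⟨a, t, rfl⟩ : ∃ a t, c₁ = a :: t := by
      cases c₁ with
      | nil => exact absurd rfl hc1ne
      | cons a t => exact ⟨a, t, rfl⟩
    rfl
  · rcases ht : c₂.tail with _ | ⟨b, t'⟩
    · have hc2' : c₂ = [m] := by rw [hc2, ht]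
      rw [List.append_nil, hl, hc2']; rfl
    · conv_rhs => rw [hc2, ht]
      rw [List.getLast?_cons_cons, List.getLast?_append,
        List.getLast?_eq_getLast (List.cons_ne_nil b t')]
      rfl
  · intro g
    rw [List.map_append, List.sum_append]
    nth_rewrite 2 [hc2]
    simp only [List.map_cons, List.sum_cons]
    ring

lemma sum_map_nonneg {g : P → ℝ} (hg : ∀ x, 0 ≤ g x) (l : List P) : 0 ≤ (l.map g).sum :=
  List.sum_nonneg (by intro v hv; obtain ⟨a, -, rfl⟩ := List.mem_map.mp hv; exact hg a)

lemma single_le_map_sum {g : P → ℝ} (hg : ∀ x, 0 ≤ g x) {l : List P} {a : P} (ha : a ∈ l) :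
    g a ≤ (l.map g).sum :=
  List.single_le_sum (by intro v hv; obtain ⟨b, -, rfl⟩ := List.mem_map.mp hv; exact hg b)
    _ (List.mem_map_of_mem (f := g) ha)

lemma pair_le_map_sum {g : P → ℝ} (hg : ∀ x, 0 ≤ g x) {l : List P} {a b : P}
    (ha : a ∈ l) (hb : b ∈ l) (hab : a ≠ b) : g a + g b ≤ (l.map g).sum := by
  obtain ⟨s, t, rfl⟩ := List.append_of_mem ha
  have hsum : ((s ++ a :: t).map g).sum = (s.map g).sum + (g a + (t.map g).sum) := by
    simp [List.sum_append]
  rcases List.mem_append.mp hb with hbs | hbt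
  · have h1 := single_le_map_sum hg hbs
    have h2 := sum_map_nonneg hg t
    rw [hsum]; linarith
  · rcases List.mem_cons.mp hbt with rfl | hbt
    · exact absurd rfl hab
    · have h1 := single_le_map_sum hg hbt
      have h2 := sum_map_nonneg hg s
      rw [hsum]; linarith

end Chains
section PHatCovers
set_option linter.unusedSectionVars false

variable {P : Type*} [PartialOrder P]

@[simp] lemma hatOR_toHat (f : P → ℝ) (x : P) : hatOR f (toHat x) = f x := rfl
@[simp] lemma hatOR_bot' (f : P → ℝ) : hatOR f (⊥ : PHat P) = 1 := rfl
@[simp] lemma hatOR_top' (f : P → ℝ) : hatOR f ((⊤ : WithTop P) : PHat P) = 0 := rfl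
@[simp] lemma hatOP_toHat (f : P → ℝ) (x : P) : hatOP f (toHat x) = f x := rfl
@[simp] lemma hatOP_bot' (f : P → ℝ) : hatOP f (⊥ : PHat P) = 0 := rfl

lemma toHat_covBy_toHat {x z : P} : toHat x ⋖ toHat z ↔ x ⋖ z := by
  rw [toHat, toHat, WithBot.coe_covBy_coe, WithTop.coe_covBy_coe]

lemma toHat_covBy_top {x : P} : toHat x ⋖ ((⊤ : WithTop P) : PHat P) ↔ IsMax x := by
  rw [toHat, WithBot.coe_covBy_coe, WithTop.coe_covBy_top]

lemma isMin_coe_withTop {x : P} : IsMin (x : WithTop P) ↔ IsMin x := by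
  constructor
  · intro h b hb
    exact_mod_cast h (by exact_mod_cast hb : (b : WithTop P) ≤ x)
  · intro h b hb
    induction b using WithTop.recTopCoe with
    | top => exact absurd hb (by simp)
    | coe c => exact_mod_cast h (by exact_mod_cast hb : c ≤ x)

lemma bot_covBy_toHat {x : P} : (⊥ : PHat P) ⋖ toHat x ↔ IsMin x := by
  rw [toHat, WithBot.bot_covBy_coe, isMin_coe_withTop]

lemma not_toHat_covBy_bot {x : P} : ¬ toHat x ⋖ (⊥ : PHat P) := fun h =>
  absurd h.lt (by simp [toHat])

lemma not_top_covBy_toHat {x : P} : ¬ ((⊤ : WithTop P) : PHat P) ⋖ toHat x := fun h =>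
  absurd h.lt (by simp [toHat, WithBot.coe_lt_coe])

lemma upSet_eq (f : P → ℝ) (x : P) :
    {v : ℝ | ∃ y : PHat P, toHat x ⋖ y ∧ v = hatOR f y}
      = if IsMax x then {0} else f '' {z | x ⋖ z} := by
  by_cases hx : IsMax x <;> [rw [if_pos hx]; rw [if_neg hx]] <;> ext v <;>
    simp only [Set.mem_setOf_eq, Set.mem_singleton_iff, Set.mem_image] <;> constructor
  · rintro ⟨y, hy, rfl⟩
    induction y using WithBot.recBotCoe with
    | bot => exact absurd hy not_toHat_covBy_bot
    | coe w =>
      induction w using WithTop.recTopCoe with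
      | top => rfl
      | coe z => exact absurd (toHat_covBy_toHat.mp hy).lt hx.not_lt
  · rintro rfl
    exact ⟨_, toHat_covBy_top.mpr hx, rfl⟩
  · rintro ⟨y, hy, rfl⟩
    induction y using WithBot.recBotCoe with
    | bot => exact absurd hy not_toHat_covBy_bot
    | coe w =>
      induction w using WithTop.recTopCoe with
      | top => exact absurd (toHat_covBy_top.mp hy) hx
      | coe z => exact ⟨z, toHat_covBy_toHat.mp hy, rfl⟩
  · rintro ⟨z, hz, rfl⟩
    exact ⟨toHat z, toHat_covBy_toHat.mpr hz, rfl⟩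

lemma lowSet_eq (f : P → ℝ) (x : P) :
    {v : ℝ | ∃ y : PHat P, y ⋖ toHat x ∧ v = hatOR f y}
      = if IsMin x then {1} else f '' {z | z ⋖ x} := by
  by_cases hx : IsMin x <;> [rw [if_pos hx]; rw [if_neg hx]] <;> ext v <;>
    simp only [Set.mem_setOf_eq, Set.mem_singleton_iff, Set.mem_image] <;> constructor
  · rintro ⟨y, hy, rfl⟩
    induction y using WithBot.recBotCoe with
    | bot => rfl
    | coe w =>
      induction w using WithTop.recTopCoe with
      | top => exact absurd hy not_top_covBy_toHat
      | coe z => exact absurd (toHat_covBy_toHat.mp hy).lt hx.not_lt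
  · rintro rfl
    exact ⟨⊥, bot_covBy_toHat.mpr hx, rfl⟩
  · rintro ⟨y, hy, rfl⟩
    induction y using WithBot.recBotCoe with
    | bot => exact absurd (bot_covBy_toHat.mp hy) hx
    | coe w =>
      induction w using WithTop.recTopCoe with
      | top => exact absurd hy not_top_covBy_toHat
      | coe z => exact ⟨z, toHat_covBy_toHat.mp hy, rfl⟩
  · rintro ⟨z, hz, rfl⟩
    exact ⟨toHat z, toHat_covBy_toHat.mpr hz, rfl⟩

lemma lowSetOP_eq (f : P → ℝ) (x : P) :
    {v : ℝ | ∃ y : PHat P, y ⋖ toHat x ∧ v = hatOP f y}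
      = if IsMin x then {0} else f '' {z | z ⋖ x} := by
  by_cases hx : IsMin x <;> [rw [if_pos hx]; rw [if_neg hx]] <;> ext v <;>
    simp only [Set.mem_setOf_eq, Set.mem_singleton_iff, Set.mem_image] <;> constructor
  · rintro ⟨y, hy, rfl⟩
    induction y using WithBot.recBotCoe with
    | bot => rfl
    | coe w =>
      induction w using WithTop.recTopCoe with
      | top => exact absurd hy not_top_covBy_toHat
      | coe z => exact absurd (toHat_covBy_toHat.mp hy).lt hx.not_lt
  · rintro rfl
    exact ⟨⊥, bot_covBy_toHat.mpr hx, rfl⟩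
  · rintro ⟨y, hy, rfl⟩
    induction y using WithBot.recBotCoe with
    | bot => exact absurd (bot_covBy_toHat.mp hy) hx
    | coe w =>
      induction w using WithTop.recTopCoe with
      | top => exact absurd hy not_top_covBy_toHat
      | coe z => exact ⟨z, toHat_covBy_toHat.mp hy, rfl⟩
  · rintro ⟨z, hz, rfl⟩
    exact ⟨toHat z, toHat_covBy_toHat.mpr hz, rfl⟩

lemma upSet_congr {f₁ f₂ : P → ℝ} {x : P} (h : ∀ z : P, x ⋖ z → f₁ z = f₂ z) :
    {v : ℝ | ∃ y : PHat P, toHat x ⋖ y ∧ v = hatOR f₁ y}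
      = {v : ℝ | ∃ y : PHat P, toHat x ⋖ y ∧ v = hatOR f₂ y} := by
  rw [upSet_eq, upSet_eq]
  by_cases hx : IsMax x
  · rw [if_pos hx, if_pos hx]
  · rw [if_neg hx, if_neg hx]
    exact Set.image_congr h

lemma lowSetOP_congr {f₁ f₂ : P → ℝ} {x : P} (h : ∀ z : P, z ⋖ x → f₁ z = f₂ z) :
    {v : ℝ | ∃ y : PHat P, y ⋖ toHat x ∧ v = hatOP f₁ y}
      = {v : ℝ | ∃ y : PHat P, y ⋖ toHat x ∧ v = hatOP f₂ y} := by
  rw [lowSetOP_eq, lowSetOP_eq]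
  by_cases hx : IsMin x
  · rw [if_pos hx, if_pos hx]
  · rw [if_neg hx, if_neg hx]
    exact Set.image_congr h

lemma upSet_finite [Fintype P] (f : P → ℝ) (x : P) :
    {v : ℝ | ∃ y : PHat P, toHat x ⋖ y ∧ v = hatOR f y}.Finite := by
  rw [upSet_eq]
  split
  · exact Set.finite_singleton 0
  · exact (Set.toFinite _).image f

lemma upSet_nonempty [Fintype P] (f : P → ℝ) (x : P) :
    {v : ℝ | ∃ y : PHat P, toHat x ⋖ y ∧ v = hatOR f y}.Nonempty := by
  rw [upSet_eq]
  split
  · exact ⟨0, rfl⟩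
  · next hx => obtain ⟨z, hz⟩ := exists_covBy_of_not_isMax hx; exact ⟨f z, z, hz, rfl⟩

lemma lowSet_finite [Fintype P] (f : P → ℝ) (x : P) :
    {v : ℝ | ∃ y : PHat P, y ⋖ toHat x ∧ v = hatOR f y}.Finite := by
  rw [lowSet_eq]
  split
  · exact Set.finite_singleton 1
  · exact (Set.toFinite _).image f

lemma lowSet_nonempty [Fintype P] (f : P → ℝ) (x : P) :
    {v : ℝ | ∃ y : PHat P, y ⋖ toHat x ∧ v = hatOR f y}.Nonempty := by
  rw [lowSet_eq]
  split
  · exact ⟨1, rfl⟩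
  · next hx => obtain ⟨z, hz⟩ := exists_covBy_of_not_isMin hx; exact ⟨f z, z, hz, rfl⟩

lemma lowSetOP_finite [Fintype P] (f : P → ℝ) (x : P) :
    {v : ℝ | ∃ y : PHat P, y ⋖ toHat x ∧ v = hatOP f y}.Finite := by
  rw [lowSetOP_eq]
  split
  · exact Set.finite_singleton 0
  · exact (Set.toFinite _).image f

lemma lowSetOP_nonempty [Fintype P] (f : P → ℝ) (x : P) :
    {v : ℝ | ∃ y : PHat P, y ⋖ toHat x ∧ v = hatOP f y}.Nonempty := by
  rw [lowSetOP_eq]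
  split
  · exact ⟨0, rfl⟩
  · next hx => obtain ⟨z, hz⟩ := exists_covBy_of_not_isMin hx; exact ⟨f z, z, hz, rfl⟩

end PHatCovers
section Transfer
set_option linter.unusedSectionVars false

variable {P : Type*} [PartialOrder P] [Fintype P]

/-- The maximum, over maximal chains through `e`, of the sum of labels. -/
noncomputable def Mval (g : P → ℝ) (e : P) : ℝ :=
  sSup ((fun l => (l.map g).sum) '' maxChainsThru e)

lemma tauPL_eq (e : P) (g : P → ℝ) :
    tauPL e g = Function.update g e (1 - Mval g e) := rfl

lemma getLast_mem_getLast? {l : List P} (h : l ≠ []) : l.getLast h ∈ l.getLast? := by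
  rw [List.getLast?_eq_getLast h]; rfl

lemma maxChainsFrom_isMax {x : P} (hx : IsMax x) : maxChainsFrom x = {[x]} := by
  ext l
  constructor
  · rintro ⟨hch, hhd, z, hlast, hz⟩
    have hl : l = x :: l.tail := eq_cons_head hhd
    cases ht : l.tail with
    | nil => rw [Set.mem_singleton_iff, hl, ht]
    | cons b t =>
      rw [hl, ht] at hch
      exact absurd (List.isChain_cons_cons.mp hch).1.lt hx.not_lt
  · rintro rfl
    exact ⟨List.isChain_singleton x, rfl, x, rfl, hx⟩

lemma maxChainsTo_isMin {x : P} (hx : IsMin x) : maxChainsTo x = {[x]} := by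
  ext l
  constructor
  · rintro ⟨hch, ⟨a, hhd, ha⟩, hlast⟩
    have hne : l ≠ [] := ne_nil_of_getLast? hlast
    have hxl : l.getLast hne = x := by
      rw [List.getLast?_eq_getLast hne] at hlast
      exact Option.some_injective _ hlast
    have hrep : l.dropLast ++ [x] = l := by rw [← hxl]; exact List.dropLast_append_getLast hne
    cases hd : l.dropLast with
    | nil => rw [Set.mem_singleton_iff, ← hrep, hd]; rfl
    | cons b t =>
      rw [← hrep, hd] at hch
      have hrel := (List.isChain_append.mp hch).2.2
      have hz := hrel ((b :: t).getLast (List.cons_ne_nil b t))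
        (getLast_mem_getLast? (List.cons_ne_nil b t)) x rfl
      exact absurd hz.lt hx.not_lt
  · rintro rfl
    exact ⟨List.isChain_singleton x, ⟨x, rfl, hx⟩, rfl⟩

lemma sums_From_decomp {x : P} (hx : ¬ IsMax x) (g : P → ℝ) :
    (fun l => (l.map g).sum) '' maxChainsFrom x
      = ⋃ z ∈ {z : P | x ⋖ z},
          (fun s => g x + s) '' ((fun l => (l.map g).sum) '' maxChainsFrom z) := by
  ext v
  simp only [Set.mem_image, Set.mem_iUnion, Set.mem_setOf_eq, exists_prop]
  constructor
  · rintro ⟨l, ⟨hch, hhd, z, hlast, hz⟩, rfl⟩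
    have hl : l = x :: l.tail := eq_cons_head hhd
    cases ht : l.tail with
    | nil =>
      exfalso
      rw [hl, ht] at hlast
      simp only [List.getLast?_singleton, Option.some.injEq] at hlast
      exact hx (hlast ▸ hz)
    | cons b t =>
      rw [ht] at hl
      have hcov : x ⋖ b := by
        rw [hl] at hch
        exact (List.isChain_cons_cons.mp hch).1
      have htail : l.tail ∈ maxChainsFrom b := by
        refine ⟨?_, by rw [ht]; rfl, z, ?_, hz⟩
        · rw [hl] at hch
          rw [ht]
          exact hch.tail
        · rw [ht]
          rw [hl, List.getLast?_cons_cons] at hlast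
          exact hlast
      refine ⟨b, hcov, _, ⟨l.tail, htail, rfl⟩, ?_⟩
      rw [show l = x :: l.tail by rw [ht]; exact hl]
      simp
  · rintro ⟨z, hz, v', ⟨l, ⟨hch, hhd, w, hlast, hw⟩, rfl⟩, rfl⟩
    refine ⟨x :: l, ⟨?_, rfl, w, ?_, hw⟩, by simp⟩
    · rw [eq_cons_head hhd] at hch ⊢
      exact List.isChain_cons_cons.mpr ⟨hz, hch⟩
    · rw [show x :: l = [x] ++ l from rfl, List.getLast?_append, hlast]; rfl

lemma sums_To_decomp {x : P} (hx : ¬ IsMin x) (g : P → ℝ) :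
    (fun l => (l.map g).sum) '' maxChainsTo x
      = ⋃ z ∈ {z : P | z ⋖ x},
          (fun s => g x + s) '' ((fun l => (l.map g).sum) '' maxChainsTo z) := by
  ext v
  simp only [Set.mem_image, Set.mem_iUnion, Set.mem_setOf_eq, exists_prop]
  constructor
  · rintro ⟨l, ⟨hch, ⟨a, hhd, ha⟩, hlast⟩, rfl⟩
    have hne : l ≠ [] := ne_nil_of_getLast? hlast
    have hxl : l.getLast hne = x := by
      rw [List.getLast?_eq_getLast hne] at hlast
      exact Option.some_injective _ hlast
    have hrep : l.dropLast ++ [x] = l := by rw [← hxl]; exact List.dropLast_append_getLast hne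
    cases hd : l.dropLast with
    | nil =>
      exfalso
      have : l = [x] := by rw [← hrep, hd]; rfl
      rw [this] at hhd
      simp only [List.head?_cons, Option.some.injEq] at hhd
      exact hx (hhd ▸ ha)
    | cons b t =>
      have hch' : ((b :: t) ++ [x]).Chain' (· ⋖ ·) := by rw [← hd, hrep]; exact hch
      have hcov : (b :: t).getLast (List.cons_ne_nil b t) ⋖ x :=
        (List.isChain_append.mp hch').2.2 _ (getLast_mem_getLast? (List.cons_ne_nil b t)) x rfl
      refine ⟨(b :: t).getLast (List.cons_ne_nil b t), hcov, _,
        ⟨b :: t, ⟨(List.isChain_append.mp hch').1, ⟨a, ?_, ha⟩,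
          (List.getLast?_eq_getLast (List.cons_ne_nil b t))⟩, rfl⟩, ?_⟩
      · rw [← hrep, hd] at hhd
        simp only [List.cons_append, List.head?_cons, Option.some.injEq] at hhd ⊢
        exact hhd
      · rw [← hrep, hd]
        simp [List.sum_append]
        ring
  · rintro ⟨z, hz, v', ⟨l, ⟨hch, ⟨a, hhd, ha⟩, hlast⟩, rfl⟩, rfl⟩
    have hne : l ≠ [] := ne_nil_of_getLast? hlast
    refine ⟨l ++ [x], ⟨?_, ⟨a, ?_, ha⟩, List.getLast?_concat⟩, ?_⟩
    · refine List.isChain_append.mpr ⟨hch, List.isChain_singleton x, ?_⟩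
      intro p hp q hq
      rw [hlast] at hp
      simp only [Option.mem_def, Option.some.injEq, List.head?_cons] at hp hq
      rw [← hp, ← hq]; exact hz
    · rw [List.head?_append, hhd]; rfl
    · simp [List.sum_append]; ring

lemma ORmap_rec (g : P → ℝ) (x : P) :
    ORmap g x = g x + sSup {v : ℝ | ∃ y : PHat P, toHat x ⋖ y ∧ v = hatOR (ORmap g) y} := by
  rw [upSet_eq]
  by_cases hx : IsMax x
  · rw [if_pos hx, ORmap, maxChainsFrom_isMax hx]
    simp
  · rw [if_neg hx, ORmap, sums_From_decomp hx]
    have hb := finSup_biUnion (ι := P) (I := {z : P | x ⋖ z})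
      (S := fun z => (fun s => g x + s) '' ((fun l => (l.map g).sum) '' maxChainsFrom z))
      (Set.toFinite _) (exists_covBy_of_not_isMax hx)
      (fun i _ => ((maxChainsFrom_finite i).image _).image _)
      (fun i _ => ((maxChainsFrom_nonempty i).image _).image _)
    rw [hb]
    have h1 : ∀ z : P,
        sSup ((fun s => g x + s) '' ((fun l => (l.map g).sum) '' maxChainsFrom z))
          = g x + ORmap g z := fun z =>
      finSup_image_add ((maxChainsFrom_finite z).image _) ((maxChainsFrom_nonempty z).image _)
        (g x)
    calc sSup ((fun i => sSup ((fun s => g x + s) ''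
            ((fun l => (l.map g).sum) '' maxChainsFrom i))) '' {z : P | x ⋖ z})
        = sSup ((fun i => g x + ORmap g i) '' {z : P | x ⋖ z}) := by
          congr 1; exact Set.image_congr fun z _ => h1 z
      _ = sSup ((fun s => g x + s) '' (ORmap g '' {z : P | x ⋖ z})) := by
          rw [Set.image_image]
      _ = g x + sSup (ORmap g '' {z : P | x ⋖ z}) :=
          finSup_image_add ((Set.toFinite _).image _)
            ((show {z : P | x ⋖ z}.Nonempty from exists_covBy_of_not_isMax hx).image _) (g x)

lemma OPmap_rec (g : P → ℝ) (x : P) :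
    OPmap g x = g x + sSup {v : ℝ | ∃ y : PHat P, y ⋖ toHat x ∧ v = hatOP (OPmap g) y} := by
  rw [lowSetOP_eq]
  by_cases hx : IsMin x
  · rw [if_pos hx, OPmap, maxChainsTo_isMin hx]
    simp
  · rw [if_neg hx, OPmap, sums_To_decomp hx]
    have hb := finSup_biUnion (ι := P) (I := {z : P | z ⋖ x})
      (S := fun z => (fun s => g x + s) '' ((fun l => (l.map g).sum) '' maxChainsTo z))
      (Set.toFinite _) (exists_covBy_of_not_isMin hx)
      (fun i _ => ((maxChainsTo_finite i).image _).image _)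
      (fun i _ => ((maxChainsTo_nonempty i).image _).image _)
    rw [hb]
    have h1 : ∀ z : P,
        sSup ((fun s => g x + s) '' ((fun l => (l.map g).sum) '' maxChainsTo z))
          = g x + OPmap g z := fun z =>
      finSup_image_add ((maxChainsTo_finite z).image _) ((maxChainsTo_nonempty z).image _)
        (g x)
    calc sSup ((fun i => sSup ((fun s => g x + s) ''
            ((fun l => (l.map g).sum) '' maxChainsTo i))) '' {z : P | z ⋖ x})
        = sSup ((fun i => g x + OPmap g i) '' {z : P | z ⋖ x}) := by
          congr 1; exact Set.image_congr fun z _ => h1 z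
      _ = sSup ((fun s => g x + s) '' (OPmap g '' {z : P | z ⋖ x})) := by
          rw [Set.image_image]
      _ = g x + sSup (OPmap g '' {z : P | z ⋖ x}) :=
          finSup_image_add ((Set.toFinite _).image _)
            ((show {z : P | z ⋖ x}.Nonempty from exists_covBy_of_not_isMin hx).image _) (g x)

lemma ORmap_congr {g₁ g₂ : P → ℝ} {x : P} (h : ∀ y, x ≤ y → g₁ y = g₂ y) :
    ORmap g₁ x = ORmap g₂ x :=
  congrArg _ (Set.image_congr fun l hl => by
    rw [List.map_congr_left fun a ha => h a (le_of_mem_maxChainsFrom hl ha)])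

lemma OPmap_congr {g₁ g₂ : P → ℝ} {x : P} (h : ∀ y, y ≤ x → g₁ y = g₂ y) :
    OPmap g₁ x = OPmap g₂ x :=
  congrArg _ (Set.image_congr fun l hl => by
    rw [List.map_congr_left fun a ha => h a (le_of_mem_maxChainsTo hl ha)])

lemma map_update_of_not_mem {g : P → ℝ} {e : P} {c : ℝ} {l : List P} (h : e ∉ l) :
    l.map (Function.update g e c) = l.map g :=
  List.map_congr_left fun a ha => Function.update_of_ne (ne_of_mem_of_not_mem ha h) c g

lemma sum_map_update_mem {g : P → ℝ} {e : P} {c : ℝ} {l : List P} (hnd : l.Nodup)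
    (he : e ∈ l) :
    (l.map (Function.update g e c)).sum = (l.map g).sum - g e + c := by
  induction l with
  | nil => simp at he
  | cons a t ih =>
    rcases List.mem_cons.mp he with rfl | het
    · have hnotmem : e ∉ t := (List.nodup_cons.mp hnd).1
      simp only [List.map_cons, List.sum_cons, Function.update_self,
        map_update_of_not_mem hnotmem]
      ring
    · have hne : a ≠ e := fun h => (List.nodup_cons.mp hnd).1 (h ▸ het)
      simp only [List.map_cons, List.sum_cons, Function.update_of_ne hne,
        ih (List.nodup_cons.mp hnd).2 het]
      ring

lemma sums_image_update_mem {g : P → ℝ} {e : P} {c : ℝ} {S : Set (List P)}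
    (hS : ∀ l ∈ S, l.Nodup ∧ e ∈ l) :
    (fun l => (l.map (Function.update g e c)).sum) '' S
      = (fun v => (c - g e) + v) '' ((fun l => (l.map g).sum) '' S) := by
  rw [Set.image_image]
  apply Set.image_congr
  intro l hl
  rw [sum_map_update_mem (hS l hl).1 (hS l hl).2]; ring

lemma glue_mem_maxChainsThru {e : P} {c₁ c₂ : List P} (h1 : c₁ ∈ maxChainsTo e)
    (h2 : c₂ ∈ maxChainsFrom e) :
    c₁ ++ c₂.tail ∈ maxChainsThru e
      ∧ ∀ g : P → ℝ, ((c₁ ++ c₂.tail).map g).sum = (c₁.map g).sum + (c₂.map g).sum - g e := by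
  obtain ⟨hch1, ⟨a, hhd1, ha⟩, hlast1⟩ := h1
  obtain ⟨hch2, hhd2, z, hlast2, hz⟩ := h2
  obtain ⟨hch, hhd, hlast, hsum⟩ := glue_chain hch1 hch2 hlast1 hhd2
  refine ⟨⟨hch, ⟨a, by rw [hhd, hhd1], ha⟩, ⟨z, by rw [hlast, hlast2], hz⟩,
    List.mem_append.mpr (Or.inl (mem_of_getLast? hlast1))⟩, hsum⟩

lemma maxChainsThru_nonempty (e : P) : (maxChainsThru e).Nonempty := by
  obtain ⟨c₁, h1⟩ := maxChainsTo_nonempty e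
  obtain ⟨c₂, h2⟩ := maxChainsFrom_nonempty e
  exact ⟨c₁ ++ c₂.tail, (glue_mem_maxChainsThru h1 h2).1⟩

lemma exists_split_maxChainsThru {e : P} {l : List P} (hl : l ∈ maxChainsThru e) :
    ∃ c₁ ∈ maxChainsTo e, ∃ c₂ ∈ maxChainsFrom e,
      ∀ g : P → ℝ, (l.map g).sum = (c₁.map g).sum + (c₂.map g).sum - g e := by
  obtain ⟨hch, ⟨a, hhd, ha⟩, ⟨z, hlast, hz⟩, he⟩ := hl
  obtain ⟨s, t, rfl⟩ := List.append_of_mem he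
  have hsplit := List.isChain_split.mp hch
  have hh : (s ++ [e]).head? = (s ++ e :: t).head? := by cases s <;> rfl
  have hgl : (s ++ e :: t).getLast? = (e :: t).getLast? := by
    rw [List.getLast?_append, List.getLast?_eq_getLast (List.cons_ne_nil e t)]; rfl
  refine ⟨s ++ [e], ⟨hsplit.1, ⟨a, by rw [hh, hhd], ha⟩, List.getLast?_concat⟩,
    e :: t, ⟨hsplit.2, rfl, z, by rw [← hgl, hlast], hz⟩, fun g => ?_⟩
  simp [List.sum_append]
  ring

lemma Mval_eq (g : P → ℝ) (e : P) : Mval g e = OPmap g e + ORmap g e - g e := by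
  have hset : (fun l => (l.map g).sum) '' maxChainsThru e
      = (fun v => (- g e) + v) '' (Set.image2 (fun a b => a + b)
          ((fun l => (l.map g).sum) '' maxChainsTo e)
          ((fun l => (l.map g).sum) '' maxChainsFrom e)) := by
    ext v
    constructor
    · rintro ⟨l, hl, rfl⟩
      obtain ⟨c₁, h1, c₂, h2, hsum⟩ := exists_split_maxChainsThru hl
      exact ⟨(c₁.map g).sum + (c₂.map g).sum,
        Set.mem_image2_of_mem ⟨c₁, h1, rfl⟩ ⟨c₂, h2, rfl⟩, by dsimp only; rw [hsum g]; ring⟩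
    · rintro ⟨w, hw, rfl⟩
      obtain ⟨v₁, ⟨c₁, h1, rfl⟩, v₂, ⟨c₂, h2, rfl⟩, rfl⟩ := hw
      obtain ⟨hmem, hsum⟩ := glue_mem_maxChainsThru h1 h2
      exact ⟨c₁ ++ c₂.tail, hmem, by dsimp only; rw [hsum g]; ring⟩
  rw [Mval, hset,
    finSup_image_add (Set.Finite.image2 _ ((maxChainsTo_finite e).image _)
        ((maxChainsFrom_finite e).image _))
      (((maxChainsTo_nonempty e).image _).image2 ((maxChainsFrom_nonempty e).image _)) _,
    finSup_image2_add ((maxChainsTo_finite e).image _) ((maxChainsTo_nonempty e).image _)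
      ((maxChainsFrom_finite e).image _) ((maxChainsFrom_nonempty e).image _)]
  rw [OPmap, ORmap]
  ring

lemma Mval_congr {g₁ g₂ : P → ℝ} {e : P} (h : ∀ y, y ≤ e ∨ e ≤ y → g₁ y = g₂ y) :
    Mval g₁ e = Mval g₂ e := by
  rw [Mval_eq, Mval_eq, OPmap_congr (fun y hy => h y (Or.inl hy)),
    ORmap_congr (fun y hy => h y (Or.inr hy)), h e (Or.inl le_rfl)]

lemma Mval_update_self (g : P → ℝ) (e : P) (c : ℝ) :
    Mval (Function.update g e c) e = Mval g e - g e + c := by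
  rw [Mval, Mval,
    sums_image_update_mem (fun l hl => ⟨nodup_of_chain'_lt (chain'_lt_of_covBy hl.1), hl.2.2.2⟩),
    finSup_image_add ((maxChainsThru_finite e).image _) ((maxChainsThru_nonempty e).image _)]
  ring

lemma OPmap_update_self (g : P → ℝ) (e : P) (c : ℝ) :
    OPmap (Function.update g e c) e = OPmap g e - g e + c := by
  rw [OPmap, OPmap,
    sums_image_update_mem (fun l hl => ⟨nodup_of_chain'_lt (chain'_lt_of_covBy hl.1),
      mem_of_getLast? hl.2.2⟩),
    finSup_image_add ((maxChainsTo_finite e).image _) ((maxChainsTo_nonempty e).image _)]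
  ring

lemma ORmap_unique {g F : P → ℝ}
    (hF : ∀ x, F x = g x + sSup {v : ℝ | ∃ y : PHat P, toHat x ⋖ y ∧ v = hatOR F y}) :
    F = ORmap g := by
  funext x
  refine (IsWellFounded.wf (r := ((· > ·) : P → P → Prop))).induction
    (C := fun x => F x = ORmap g x) x ?_
  intro x IH
  rw [hF x, ORmap_rec g x,
    upSet_congr (f₁ := F) (f₂ := ORmap g) fun z hz => IH z hz.lt]

lemma ORinv_ORmap (g : P → ℝ) : ORinv (ORmap g) = g := by
  funext x
  simp only [ORinv]
  rw [ORmap_rec g x]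
  ring

lemma ORmap_ORinv (f : P → ℝ) : ORmap (ORinv f) = f :=
  (ORmap_unique fun x => by simp only [ORinv]; ring).symm

lemma tauPL_invol (e : P) (g : P → ℝ) : tauPL e (tauPL e g) = g := by
  rw [tauPL_eq, tauPL_eq,
    show Mval (Function.update g e (1 - Mval g e)) e = 1 - g e by
      rw [Mval_update_self]; ring,
    Function.update_idem]
  rw [show (1 : ℝ) - (1 - g e) = g e by ring, Function.update_eq_self]

end Transfer
section PartOne
set_option linter.unusedSectionVars false

variable {P : Type*} [PartialOrder P] [Fintype P]

lemma listComp_tauPL_apply {e : P} (s : List P) (hnd : s.Nodup) (hs : ∀ x ∈ s, x ⋖ e)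
    (g : P → ℝ) :
    listComp (s.map tauPL) g = fun x => if x ∈ s then 1 - Mval g x else g x := by
  induction s with
  | nil => funext x; simp [listComp]
  | cons a s' ih =>
    have hstep : listComp ((a :: s').map tauPL) g = tauPL a (listComp (s'.map tauPL) g) := rfl
    rw [hstep, ih (List.nodup_cons.mp hnd).2 (fun x hx => hs x (List.mem_cons_of_mem a hx))]
    have hMa : Mval (fun x => if x ∈ s' then 1 - Mval g x else g x) a = Mval g a := by
      apply Mval_congr
      intro y hy
      show (if y ∈ s' then 1 - Mval g y else g y) = g y
      rw [if_neg]
      intro hys'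
      have hya : y ≠ a := by rintro rfl; exact (List.nodup_cons.mp hnd).1 hys'
      have h1 := hs y (List.mem_cons_of_mem a hys')
      have h2 := hs a (List.mem_cons_self)
      rcases hy with hy | hy
      · rcases lt_or_eq_of_le hy with hy | rfl
        · exact absurd h2.lt (h1.2 hy)
        · exact hya rfl
      · rcases lt_or_eq_of_le hy with hy | rfl
        · exact absurd h1.lt (h2.2 hy)
        · exact hya rfl
    funext x
    rw [tauPL_eq]
    by_cases hxa : x = a
    · subst hxa
      rw [Function.update_self, if_pos (List.mem_cons_self), hMa]
    · rw [Function.update_of_ne hxa]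
      show (if x ∈ s' then 1 - Mval g x else g x) = if x ∈ a :: s' then 1 - Mval g x else g x
      by_cases hxs : x ∈ s'
      · rw [if_pos hxs, if_pos (List.mem_cons_of_mem a hxs)]
      · rw [if_neg hxs, if_neg (by simp [List.mem_cons, hxa, hxs])]

theorem part1_fun (e : P) (cov : List P) (hnd : cov.Nodup) (hc : ∀ x, x ∈ cov ↔ x ⋖ e)
    (g : P → ℝ) :
    ORmap (listComp (cov.map tauPL) (tauPL e (listComp (cov.map tauPL) g)))
      = tPL e (ORmap g) := by
  have hcovs : ∀ x ∈ cov, x ⋖ e := fun x hx => (hc x).mp hx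
  set f := ORmap g with hf
  set g₁ := listComp (cov.map tauPL) g with hg₁
  set g₂ := tauPL e g₁ with hg₂
  have hg₁x : ∀ x, g₁ x = if x ∈ cov then 1 - Mval g x else g x := fun x => by
    rw [hg₁, listComp_tauPL_apply cov hnd hcovs g]
  have hg'x : ∀ x, listComp (cov.map tauPL) g₂ x
      = if x ∈ cov then 1 - Mval g₂ x else g₂ x := fun x => by
    rw [listComp_tauPL_apply cov hnd hcovs g₂]
  have henotcov : e ∉ cov := fun h => (hcovs e h).lt.ne rfl
  have hg₁_above : ∀ y, e ≤ y → g₁ y = g y := by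
    intro y hy
    rw [hg₁x, if_neg]
    intro hmem
    exact absurd (lt_of_lt_of_le (hcovs y hmem).lt hy) (lt_irrefl y)
  have hg₂_other : ∀ x, x ≠ e → g₂ x = g₁ x := fun x hx => by
    rw [hg₂, tauPL_eq, Function.update_of_ne hx]
  have hF1 : ∀ i ∈ cov, OPmap g₁ i = 1 - f i := by
    intro i hi
    have hupd : ∀ y, y ≤ i → g₁ y = Function.update g i (1 - Mval g i) y := by
      intro y hy
      rcases eq_or_lt_of_le hy with rfl | hlt
      · rw [hg₁x, if_pos hi, Function.update_self]
      · rw [hg₁x, if_neg, Function.update_of_ne hlt.ne]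
        intro hmem
        exact absurd (hcovs i hi).lt ((hcovs y hmem).2 hlt)
    rw [OPmap_congr hupd, OPmap_update_self, Mval_eq, ← hf]
    ring
  set L := sInf {v : ℝ | ∃ y : PHat P, y ⋖ toHat e ∧ v = hatOR f y} with hL
  set U := sSup {v : ℝ | ∃ y : PHat P, toHat e ⋖ y ∧ v = hatOR f y} with hU
  have htPLe : tPL e f e = U + L - f e := by
    simp only [tPL]
    rw [Function.update_self, ← hU, ← hL]
  have hD1 : OPmap g₁ e = g e + (1 - L) := by
    rw [OPmap_rec, hg₁_above e le_rfl]
    congr 1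
    have hset : {v : ℝ | ∃ y : PHat P, y ⋖ toHat e ∧ v = hatOP (OPmap g₁) y}
        = (fun v => 1 - v) '' {v : ℝ | ∃ y : PHat P, y ⋖ toHat e ∧ v = hatOR f y} := by
      rw [lowSetOP_eq, lowSet_eq]
      by_cases he : IsMin e
      · rw [if_pos he, if_pos he]; simp
      · rw [if_neg he, if_neg he, ← Set.image_comp]
        apply Set.image_congr
        intro z hz
        exact hF1 z ((hc z).mpr hz)
    rw [hset, finSup_image_one_sub (lowSet_finite f e) (lowSet_nonempty f e), hL]
  have hM1 : Mval g₁ e = 1 - L + f e := by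
    rw [Mval_eq, hD1, hg₁_above e le_rfl, ORmap_congr (g₂ := g) hg₁_above, ← hf]
    ring
  have hg₂e : g₂ e = L - f e := by
    rw [hg₂, tauPL_eq, Function.update_self, hM1]; ring
  have hORg₂ : ∀ z : P, (∀ y, z ≤ y → y ≠ e ∧ y ∉ cov) → ORmap g₂ z = f z := by
    intro z hz
    rw [hf]
    apply ORmap_congr
    intro y hy
    rw [hg₂_other y (hz y hy).1, hg₁x, if_neg (hz y hy).2]
  have hF5 : ORmap g₂ e = U + L - f e := by
    rw [ORmap_rec, hg₂e]
    have hset : {v : ℝ | ∃ y : PHat P, toHat e ⋖ y ∧ v = hatOR (ORmap g₂) y}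
        = {v : ℝ | ∃ y : PHat P, toHat e ⋖ y ∧ v = hatOR f y} := by
      apply upSet_congr
      intro z hz
      apply hORg₂
      intro y hy
      constructor
      · rintro rfl
        exact absurd (hz.lt.trans_le hy) (lt_irrefl _)
      · intro hmem
        exact absurd ((hcovs y hmem).lt.trans (hz.lt.trans_le hy)) (lt_irrefl y)
    rw [hset, ← hU]
    ring
  have hF2 : ∀ i ∈ cov, OPmap g₂ i = 1 - f i := by
    intro i hi
    rw [OPmap_congr (g₂ := g₁) (x := i)
      (fun y hy => hg₂_other y (by rintro rfl; exact not_le_of_gt (hcovs i hi).lt hy)), hF1 i hi]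
  have main : ∀ x : P, ORmap (listComp (cov.map tauPL) g₂) x = tPL e f x := by
    intro x
    refine (IsWellFounded.wf (r := ((· > ·) : P → P → Prop))).induction
      (C := fun x => ORmap (listComp (cov.map tauPL) g₂) x = tPL e f x) x ?_
    intro x IH
    have hrec := ORmap_rec (listComp (cov.map tauPL) g₂) x
    have hsetIH : {v : ℝ | ∃ y : PHat P, toHat x ⋖ y
          ∧ v = hatOR (ORmap (listComp (cov.map tauPL) g₂)) y}
        = {v : ℝ | ∃ y : PHat P, toHat x ⋖ y ∧ v = hatOR (tPL e f) y} :=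
      upSet_congr fun z hz => IH z hz.lt
    rw [hrec, hsetIH]
    by_cases hxe : x = e
    · subst hxe
      rw [hg'x, if_neg henotcov]
      have hS : {v : ℝ | ∃ y : PHat P, toHat x ⋖ y ∧ v = hatOR (tPL x f) y}
          = {v : ℝ | ∃ y : PHat P, toHat x ⋖ y ∧ v = hatOR f y} :=
        upSet_congr fun z hz => Function.update_of_ne hz.lt.ne' _ _
      rw [hS, htPLe, hg₂e, ← hU]
      ring
    · rw [show tPL e f x = f x from Function.update_of_ne hxe _ _]
      by_cases hxcov : x ∈ cov
      · rw [hg'x, if_pos hxcov]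
        have hSeq : {v : ℝ | ∃ y : PHat P, toHat x ⋖ y ∧ v = hatOR (tPL e f) y}
            = {v : ℝ | ∃ y : PHat P, toHat x ⋖ y ∧ v = hatOR (ORmap g₂) y} := by
          apply upSet_congr
          intro z hz
          by_cases hze : z = e
          · subst hze
            rw [show tPL z f z = U + L - f z from htPLe, hF5]
          · rw [show tPL e f z = f z from Function.update_of_ne hze _ _]
            refine (hORg₂ z ?_).symm
            intro y hy
            constructor
            · intro hye
              have hze' : z < e := lt_of_le_of_ne (hye ▸ hy) hze
              exact absurd hze' ((hcovs x hxcov).2 hz.lt)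
            · intro hmem
              have hxy : x < y := lt_of_lt_of_le hz.lt hy
              exact absurd (hcovs y hmem).lt ((hcovs x hxcov).2 hxy)
        have hrec2 := ORmap_rec g₂ x
        have hM2 : Mval g₂ x = OPmap g₂ x + ORmap g₂ x - g₂ x := Mval_eq g₂ x
        rw [hSeq, hM2, hF2 x hxcov, hrec2]
        ring
      · rw [hg'x, if_neg hxcov, hg₂_other x hxe, hg₁x, if_neg hxcov]
        have hSeq : {v : ℝ | ∃ y : PHat P, toHat x ⋖ y ∧ v = hatOR (tPL e f) y}
            = {v : ℝ | ∃ y : PHat P, toHat x ⋖ y ∧ v = hatOR f y} := by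
          apply upSet_congr
          intro z hz
          refine Function.update_of_ne ?_ _ _
          rintro rfl
          exact hxcov ((hc x).mpr hz)
        rw [hSeq, hf]
        exact (ORmap_rec g x).symm
  funext x
  exact main x

end PartOne
section ToggleGroup
set_option linter.unusedSectionVars false

variable {P : Type*} [PartialOrder P]

lemma lowSet_congr {f₁ f₂ : P → ℝ} {x : P} (h : ∀ z : P, z ⋖ x → f₁ z = f₂ z) :
    {v : ℝ | ∃ y : PHat P, y ⋖ toHat x ∧ v = hatOR f₁ y}
      = {v : ℝ | ∃ y : PHat P, y ⋖ toHat x ∧ v = hatOR f₂ y} := by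
  rw [lowSet_eq, lowSet_eq]
  by_cases hx : IsMin x
  · rw [if_pos hx, if_pos hx]
  · rw [if_neg hx, if_neg hx]
    exact Set.image_congr h

lemma tPL_comm {x y : P} (hxy : x ≠ y) (h1 : ¬ x ⋖ y) (h2 : ¬ y ⋖ x) (f : P → ℝ) :
    tPL x (tPL y f) = tPL y (tPL x f) := by
  have hux : ∀ c : ℝ,
      {v : ℝ | ∃ z : PHat P, toHat x ⋖ z ∧ v = hatOR (Function.update f y c) z}
        = {v : ℝ | ∃ z : PHat P, toHat x ⋖ z ∧ v = hatOR f z} := fun c =>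
    upSet_congr fun z hz => Function.update_of_ne (by rintro rfl; exact h1 hz) _ _
  have hlx : ∀ c : ℝ,
      {v : ℝ | ∃ z : PHat P, z ⋖ toHat x ∧ v = hatOR (Function.update f y c) z}
        = {v : ℝ | ∃ z : PHat P, z ⋖ toHat x ∧ v = hatOR f z} := fun c =>
    lowSet_congr fun z hz => Function.update_of_ne (by rintro rfl; exact h2 hz) _ _
  have huy : ∀ c : ℝ,
      {v : ℝ | ∃ z : PHat P, toHat y ⋖ z ∧ v = hatOR (Function.update f x c) z}
        = {v : ℝ | ∃ z : PHat P, toHat y ⋖ z ∧ v = hatOR f z} := fun c =>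
    upSet_congr fun z hz => Function.update_of_ne (by rintro rfl; exact h2 hz) _ _
  have hly : ∀ c : ℝ,
      {v : ℝ | ∃ z : PHat P, z ⋖ toHat y ∧ v = hatOR (Function.update f x c) z}
        = {v : ℝ | ∃ z : PHat P, z ⋖ toHat y ∧ v = hatOR f z} := fun c =>
    lowSet_congr fun z hz => Function.update_of_ne (by rintro rfl; exact h1 hz) _ _
  simp only [tPL]
  rw [hux _, hlx _, huy _, hly _, Function.update_of_ne hxy _ _,
    Function.update_of_ne hxy.symm _ _, Function.update_comm hxy.symm]

lemma tPLPerm_comm {x y : P} (hxy : x ≠ y) (h1 : ¬ x ⋖ y) (h2 : ¬ y ⋖ x) :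
    Commute (tPLPerm (P := P) x) (tPLPerm y) :=
  Equiv.ext fun f => by
    simp only [Equiv.Perm.mul_apply]
    show tPL x (tPL y f) = tPL y (tPL x f)
    exact tPL_comm hxy h1 h2 f

lemma tPLPerm_comm_incomp {x y : P} (h1 : ¬ x ≤ y) (h2 : ¬ y ≤ x) :
    Commute (tPLPerm (P := P) x) (tPLPerm y) :=
  tPLPerm_comm (by rintro rfl; exact h1 le_rfl) (fun h => h1 h.le) (fun h => h2 h.le)

lemma tPLPerm_sq (x : P) : tPLPerm (P := P) x * tPLPerm x = 1 :=
  Equiv.ext fun f => by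
    simp only [Equiv.Perm.mul_apply]
    exact tPL_involutive x f

/-! ### Linear extension lists -/

lemma isLinExt_pairwise {S : Set P} {l : List P} (h : IsLinExtListOn S l) :
    l.Pairwise (fun a b => ¬ b < a) := by
  obtain ⟨hnd, hmem, hord⟩ := h
  rw [List.pairwise_iff_get]
  intro i j hij hlt
  have := hord j i hlt
  omega

lemma isLinExt_of {S : Set P} {l : List P} (hnd : l.Nodup) (hmem : ∀ x, x ∈ l ↔ x ∈ S)
    (hpw : l.Pairwise (fun a b => ¬ b < a)) : IsLinExtListOn S l := by
  refine ⟨hnd, hmem, ?_⟩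
  intro i j hlt
  rcases lt_trichotomy (i : ℕ) (j : ℕ) with h | h | h
  · exact h
  · exact absurd hlt (by rw [Fin.val_injective h]; exact lt_irrefl _)
  · exact absurd hlt (List.pairwise_iff_get.mp hpw j i (by exact h))

lemma exists_isLinExt [Fintype P] (S : Set P) : ∃ l, IsLinExtListOn S l := by
  classical
  let r : P → P → Prop := fun a b => toLinearExtension a ≤ toLinearExtension b
  have hinj : Function.Injective (toLinearExtension (α := P)) := fun a b h => h
  haveI : IsTrans P r := ⟨fun _ _ _ h1 h2 => le_trans h1 h2⟩
  haveI : IsAntisymm P r := ⟨fun a b h1 h2 => hinj (le_antisymm h1 h2)⟩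
  haveI : IsTotal P r := ⟨fun a b => le_total _ _⟩
  refine ⟨S.toFinset.sort r, ?_⟩
  apply isLinExt_of (Finset.sort_nodup _ r)
  · intro x
    rw [Finset.mem_sort, Set.mem_toFinset]
  · have hs := Finset.pairwise_sort S.toFinset r
    refine hs.imp_of_mem ?_
    intro a b ha hb hr hba
    exact absurd (hinj (le_antisymm hr (toLinearExtension.monotone hba.le))) hba.ne'

lemma isLinExt_append {S T : Set P} {l₁ l₂ : List P} (h₁ : IsLinExtListOn T l₁)
    (h₂ : IsLinExtListOn (S \ T) l₂) (hT : T ⊆ S)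
    (hdc : ∀ x ∈ S, ∀ y ∈ T, x < y → x ∈ T) : IsLinExtListOn S (l₁ ++ l₂) := by
  have hmem : ∀ x, x ∈ l₁ ++ l₂ ↔ x ∈ S := by
    intro x
    rw [List.mem_append, h₁.2.1 x, (h₂.2.1 x)]
    constructor
    · rintro (h | h)
      · exact hT h
      · exact h.1
    · intro h
      by_cases hx : x ∈ T
      · exact Or.inl hx
      · exact Or.inr ⟨h, hx⟩
  refine isLinExt_of ?_ hmem ?_
  · rw [List.nodup_append]
    refine ⟨h₁.1, h₂.1, ?_⟩
    intro a ha b hb hab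
    subst hab
    exact (((h₂.2.1 a).mp hb).2 ((h₁.2.1 a).mp ha))
  · rw [List.pairwise_append]
    refine ⟨isLinExt_pairwise h₁, isLinExt_pairwise h₂, ?_⟩
    intro a ha b hb hba
    have haT := (h₁.2.1 a).mp ha
    have hbS := (h₂.2.1 b).mp hb
    exact hbS.2 (hdc b hbS.1 a haT hba)

section GroupAux
variable {G : Type*} [Group G]

lemma prod_map_conj {ι : Type*} (σ : G) (A : ι → G) (l : List ι) :
    (l.map (fun i => σ * A i * σ⁻¹)).prod = σ * (l.map A).prod * σ⁻¹ := by
  induction l with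
  | nil => simp
  | cons a t ih =>
    simp only [List.map_cons, List.prod_cons, ih]
    group

lemma prod_sq_one : ∀ l : List G, (∀ x ∈ l, x * x = 1) → l.Pairwise Commute →
    l.prod * l.prod = 1 := by
  intro l
  induction l with
  | nil => simp
  | cons a t ih =>
    intro hsq hpw
    have hcomm : Commute a t.prod :=
      Commute.list_prod_right t a (List.pairwise_cons.mp hpw).1
    rw [List.prod_cons]
    calc a * t.prod * (a * t.prod) = a * (t.prod * a) * t.prod := by group
      _ = a * (a * t.prod) * t.prod := by rw [← hcomm.eq]
      _ = (a * a) * (t.prod * t.prod) := by group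
      _ = 1 := by
          rw [hsq a (List.mem_cons_self),
            ih (fun x hx => hsq x (List.mem_cons_of_mem a hx)) (List.pairwise_cons.mp hpw).2]
          group

lemma linext_prod_eq {φ : P → G}
    (hcomm : ∀ x y : P, ¬ x ≤ y → ¬ y ≤ x → Commute (φ x) (φ y)) :
    ∀ (n : ℕ) (l₁ l₂ : List P) (S : Set P), l₁.length ≤ n →
      IsLinExtListOn S l₁ → IsLinExtListOn S l₂ →
      (l₁.map φ).prod = (l₂.map φ).prod := by
  intro n
  induction n with
  | zero =>
    intro l₁ l₂ S hlen h1 h2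
    obtain rfl : l₁ = [] := List.length_eq_zero_iff.mp (Nat.le_zero.mp hlen)
    obtain rfl : l₂ = [] := by
      cases l₂ with
      | nil => rfl
      | cons a t =>
        exact absurd ((h1.2.1 a).mpr ((h2.2.1 a).mp (List.mem_cons_self)))
          List.not_mem_nil
    rfl
  | succ n ih =>
    intro l₁ l₂ S hlen h1 h2
    by_cases hnil : l₁ = []
    · subst hnil
      obtain rfl : l₂ = [] := by
        cases l₂ with
        | nil => rfl
        | cons a t =>
          exact absurd ((h1.2.1 a).mpr ((h2.2.1 a).mp (List.mem_cons_self)))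
            List.not_mem_nil
      rfl
    · have hne : l₁ ≠ [] := hnil
      set m := l₁.getLast hne with hm
      have hrep : l₁.dropLast ++ [m] = l₁ := List.dropLast_append_getLast hne
      have hmS : m ∈ S := (h1.2.1 m).mp (mem_of_getLast? (List.getLast?_eq_getLast hne))
      have hmax : ∀ b ∈ S, ¬ m < b := by
        intro b hb hlt
        have hbl : b ∈ l₁ := (h1.2.1 b).mpr hb
        rw [← hrep] at hbl
        have hpw : l₁.Pairwise (fun a b => ¬ b < a) := isLinExt_pairwise h1
        rw [← hrep, List.pairwise_append] at hpw
        rcases List.mem_append.mp hbl with hbd | hbm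
        · exact hpw.2.2 b hbd m (List.mem_singleton_self m) hlt
        · rw [List.mem_singleton.mp hbm] at hlt
          exact lt_irrefl m hlt
      have hml₂ : m ∈ l₂ := (h2.2.1 m).mpr hmS
      obtain ⟨u, v, rfl⟩ := List.append_of_mem hml₂
      have hnd₂ := h2.1
      have hpw₂ := isLinExt_pairwise h2
      have hcommv : ∀ b ∈ v, Commute (φ m) (φ b) := by
        intro b hb
        have hbS : b ∈ S := (h2.2.1 b).mp (List.mem_append.mpr (Or.inr (List.mem_cons_of_mem m hb)))
        have hnbm : ¬ b < m := by
          rw [List.pairwise_append] at hpw₂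
          have := (List.pairwise_cons.mp hpw₂.2.1).1 b hb
          exact this
        have hnmb : ¬ m < b := hmax b hbS
        have hbm : b ≠ m := by
          rintro rfl
          rw [List.nodup_append] at hnd₂
          exact (List.nodup_cons.mp hnd₂.2.1).1 hb
        exact hcomm m b (fun h => hnmb (lt_of_le_of_ne h (Ne.symm hbm)))
          (fun h => hnbm (lt_of_le_of_ne h hbm))
      -- products
      have hprod₂ : ((u ++ m :: v).map φ).prod = ((u ++ v).map φ).prod * φ m := by
        rw [List.map_append, List.prod_append, List.map_cons, List.prod_cons,
          List.map_append, List.prod_append]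
        have : φ m * (v.map φ).prod = (v.map φ).prod * φ m :=
          (Commute.list_prod_right _ _ (fun y hy => by
            obtain ⟨b, hb, rfl⟩ := List.mem_map.mp hy
            exact hcommv b hb)).eq
        rw [this]
        group
      have hprod₁ : (l₁.map φ).prod = (l₁.dropLast.map φ).prod * φ m := by
        conv_lhs => rw [← hrep]
        rw [List.map_append, List.prod_append]
        simp
      -- new lin exts on S \ {m}
      have hmd : m ∉ l₁.dropLast := by
        have := h1.1
        rw [← hrep, List.nodup_append] at this
        intro hmem
        exact this.2.2 _ hmem _ (List.mem_singleton_self m) rfl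
      have h1' : IsLinExtListOn (S \ {m}) l₁.dropLast := by
        have hpw : l₁.Pairwise (fun a b => ¬ b < a) := isLinExt_pairwise h1
        refine isLinExt_of ?_ ?_ ?_
        · have := h1.1; rw [← hrep, List.nodup_append] at this; exact this.1
        · intro x
          constructor
          · intro hx
            refine ⟨(h1.2.1 x).mp (by rw [← hrep]; exact List.mem_append.mpr (Or.inl hx)), ?_⟩
            intro hxm
            rw [Set.mem_singleton_iff.mp hxm] at hx
            exact hmd hx
          · rintro ⟨hxS, hxm⟩
            have : x ∈ l₁ := (h1.2.1 x).mpr hxS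
            rw [← hrep] at this
            rcases List.mem_append.mp this with h | h
            · exact h
            · exact absurd (List.mem_singleton.mp h) hxm
        · rw [← hrep, List.pairwise_append] at hpw
          exact hpw.1
      have hmu : m ∉ u ∧ m ∉ v := by
        rw [List.nodup_append] at hnd₂
        exact ⟨fun h => hnd₂.2.2 _ h _ List.mem_cons_self rfl, (List.nodup_cons.mp hnd₂.2.1).1⟩
      have h2' : IsLinExtListOn (S \ {m}) (u ++ v) := by
        have hsub : (u ++ v).Sublist (u ++ m :: v) :=
          List.Sublist.append_left (List.sublist_cons_self m v) u
        refine isLinExt_of (hnd₂.sublist hsub) ?_ (hpw₂.sublist hsub)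
        intro x
        constructor
        · intro hx
          have hxl : x ∈ u ++ m :: v := hsub.mem hx
          refine ⟨(h2.2.1 x).mp hxl, ?_⟩
          intro hxm
          rw [Set.mem_singleton_iff.mp hxm] at hx
          rcases List.mem_append.mp hx with h | h
          · exact hmu.1 h
          · exact hmu.2 h
        · rintro ⟨hxS, hxm⟩
          have : x ∈ u ++ m :: v := (h2.2.1 x).mpr hxS
          rcases List.mem_append.mp this with h | h
          · exact List.mem_append.mpr (Or.inl h)
          · rcases List.mem_cons.mp h with rfl | h
            · exact absurd rfl hxm
            · exact List.mem_append.mpr (Or.inr h)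
      have hlen' : l₁.dropLast.length ≤ n := by
        have : l₁.length = l₁.dropLast.length + 1 := by
          conv_lhs => rw [← hrep]
          simp
        omega
      rw [hprod₁, hprod₂, ih l₁.dropLast (u ++ v) (S \ {m}) hlen' h1' h2']

end GroupAux

lemma etaPLPerm_append (l₁ l₂ : List P) :
    etaPLPerm (P := P) (l₁ ++ l₂) = etaPLPerm l₁ * etaPLPerm l₂ := by
  unfold etaPLPerm
  rw [List.map_append, List.prod_append]

lemma etaPLPerm_linext_eq {S : Set P} {l₁ l₂ : List P} (h1 : IsLinExtListOn S l₁)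
    (h2 : IsLinExtListOn S l₂) : etaPLPerm (P := P) l₁ = etaPLPerm l₂ :=
  linext_prod_eq (φ := tPLPerm)
    (fun _ _ hx hy => tPLPerm_comm_incomp hx hy) l₁.length l₁ l₂ S le_rfl h1 h2

lemma commute_etaPLPerm {a : P} {l : List P}
    (h : ∀ x ∈ l, Commute (tPLPerm (P := P) a) (tPLPerm x)) :
    Commute (tPLPerm a) (etaPLPerm l) :=
  Commute.list_prod_right _ _ fun y hy => by
    obtain ⟨b, hb, rfl⟩ := List.mem_map.mp hy
    exact h b hb

lemma key_identity [Fintype P] (e : P) (cov : List P) (hnd : cov.Nodup)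
    (hc : ∀ x, x ∈ cov ↔ x ⋖ e)
    (lext : P → List P) (hlext : ∀ x : P, IsLinExtListOn {y : P | y < x} (lext x)) :
    ((cov.map (fun i => etaPLPerm (P := P) (lext i) * tPLPerm i * (etaPLPerm (lext i))⁻¹)).prod)⁻¹
        * tPLPerm e
        * ((cov.map (fun i => etaPLPerm (lext i) * tPLPerm i * (etaPLPerm (lext i))⁻¹)).prod)⁻¹
      = etaPLPerm (lext e) * tPLPerm e * (etaPLPerm (lext e))⁻¹ := by
  have hcovs : ∀ x ∈ cov, x ⋖ e := fun x hx => (hc x).mp hx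
  set Im : Set P := {y : P | y < e ∧ ¬ y ⋖ e} with hIm
  obtain ⟨lm, hlm⟩ := exists_isLinExt Im
  set N := etaPLPerm (P := P) lm with hN
  set E := etaPLPerm (P := P) cov with hE
  -- Step A
  have hstepA : ∀ i ∈ cov,
      etaPLPerm (P := P) (lext i) * tPLPerm i * (etaPLPerm (lext i))⁻¹
        = N * tPLPerm i * N⁻¹ := by
    intro i hi
    obtain ⟨rest, hrest⟩ := exists_isLinExt (Im \ {y : P | y < i})
    have hsubset : {y : P | y < i} ⊆ Im := by
      intro y hy
      refine ⟨hy.trans (hcovs i hi).lt, ?_⟩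
      intro hcov
      exact hcov.2 hy (hcovs i hi).lt
    have happ : IsLinExtListOn Im (lext i ++ rest) := by
      refine isLinExt_append (hlext i) hrest hsubset ?_
      intro x hx y hy hxy
      exact hxy.trans hy
    have hNeq : N = etaPLPerm (lext i) * etaPLPerm rest := by
      rw [hN, etaPLPerm_linext_eq hlm happ, etaPLPerm_append]
    have hcommrest : Commute (tPLPerm (P := P) i) (etaPLPerm rest) := by
      apply commute_etaPLPerm
      intro x hx
      have hxmem := (hrest.2.1 x).mp hx
      have hxIm : x ∈ Im := hxmem.1
      have hnxi : ¬ x < i := hxmem.2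
      refine (tPLPerm_comm ?_ ?_ ?_).symm
      · rintro rfl
        exact hxIm.2 (hcovs _ hi)
      · intro hxi
        exact hnxi hxi.lt
      · intro hix
        exact (hcovs i hi).2 hix.lt hxIm.1
    rw [hNeq, mul_inv_rev]
    calc etaPLPerm (lext i) * tPLPerm i * (etaPLPerm (lext i))⁻¹
        = etaPLPerm (lext i) * (etaPLPerm rest * tPLPerm i * (etaPLPerm rest)⁻¹)
            * (etaPLPerm (lext i))⁻¹ := by
          rw [← hcommrest.eq]; group
      _ = etaPLPerm (lext i) * etaPLPerm rest * tPLPerm i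
            * ((etaPLPerm rest)⁻¹ * (etaPLPerm (lext i))⁻¹) := by group
  -- Step B
  have hstepB :
      (cov.map (fun i => etaPLPerm (P := P) (lext i) * tPLPerm i * (etaPLPerm (lext i))⁻¹)).prod
        = N * E * N⁻¹ := by
    rw [List.map_congr_left hstepA, prod_map_conj N tPLPerm cov]
    rfl
  -- Step C
  have hcovlin : IsLinExtListOn {y : P | y ⋖ e} cov := by
    refine isLinExt_of hnd hc ?_
    apply List.pairwise_of_forall_mem_list
    intro a ha b hb hba
    exact ((hc b).mp hb).2 hba ((hc a).mp ha).lt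
  have hSdiff : {y : P | y < e} \ Im = {y : P | y ⋖ e} := by
    ext y
    constructor
    · rintro ⟨h1, h2⟩
      by_contra hc'
      exact h2 ⟨h1, hc'⟩
    · intro h
      exact ⟨h.lt, fun hIm => hIm.2 h⟩
  have hlin_e : IsLinExtListOn {y : P | y < e} (lm ++ cov) := by
    refine isLinExt_append hlm (hSdiff ▸ hcovlin) (fun y hy => hy.1) ?_
    intro x hx y hy hxy
    exact ⟨hxy.trans hy.1, fun hcov' => hcov'.2 hxy hy.1⟩
  have hstepC : etaPLPerm (P := P) (lext e) = N * E := by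
    rw [etaPLPerm_linext_eq (hlext e) hlin_e, etaPLPerm_append, hN, hE]
  -- Step D
  have hEsq : E * E = 1 := by
    rw [hE]
    apply prod_sq_one
    · intro x hx
      obtain ⟨b, hb, rfl⟩ := List.mem_map.mp hx
      exact tPLPerm_sq b
    · rw [List.pairwise_map]
      apply List.pairwise_of_forall_mem_list
      intro a ha b hb
      by_cases hab : a = b
      · rw [hab]; exact Commute.refl _
      · refine tPLPerm_comm_incomp ?_ ?_
        · intro hle
          have hlt : a < b := lt_of_le_of_ne hle hab
          exact ((hc a).mp ha).2 hlt ((hc b).mp hb).lt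
        · intro hle
          have hlt : b < a := lt_of_le_of_ne hle (Ne.symm hab)
          exact ((hc b).mp hb).2 hlt ((hc a).mp ha).lt
  have hEinv : E⁻¹ = E := inv_eq_iff_mul_eq_one.mpr hEsq
  -- Step E
  have hcommN : Commute (tPLPerm (P := P) e) N := by
    rw [hN]
    apply commute_etaPLPerm
    intro x hx
    have hxIm := (hlm.2.1 x).mp hx
    refine tPLPerm_comm ?_ ?_ ?_
    · rintro rfl
      exact lt_irrefl _ hxIm.1
    · intro hex
      exact absurd (hex.lt.trans hxIm.1) (lt_irrefl e)
    · exact hxIm.2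
  have hNtN : N⁻¹ * tPLPerm e * N = tPLPerm e := by
    rw [mul_assoc, hcommN.eq, ← mul_assoc, inv_mul_cancel, one_mul]
  rw [hstepB, hstepC]
  calc (N * E * N⁻¹)⁻¹ * tPLPerm e * (N * E * N⁻¹)⁻¹
      = N * E⁻¹ * (N⁻¹ * tPLPerm e * N) * E⁻¹ * N⁻¹ := by group
    _ = N * E⁻¹ * tPLPerm e * E⁻¹ * N⁻¹ := by rw [hNtN]
    _ = N * E * tPLPerm e * (E⁻¹ * N⁻¹) := by rw [hEinv]; group
    _ = N * E * tPLPerm e * (N * E)⁻¹ := by rw [mul_inv_rev, hEinv]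

end ToggleGroup
section PartTwo
set_option linter.unusedSectionVars false

variable {P : Type*} [PartialOrder P] [Fintype P]

lemma tauPL_involutive (e : P) : Function.Involutive (tauPL (P := P) e) :=
  fun g => tauPL_invol e g

/-- The chain-polytope toggle as a permutation of all labelings. -/
noncomputable def tauPLPerm (e : P) : Equiv.Perm (P → ℝ) :=
  (tauPL_involutive e).toPerm _

@[simp] lemma tauPLPerm_apply (e : P) (g : P → ℝ) : tauPLPerm e g = tauPL e g := rfl

@[simp] lemma tPLPerm_apply (e : P) (f : P → ℝ) : tPLPerm e f = tPL e f := rfl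

/-- The transfer map as a permutation of all labelings. -/
noncomputable def ORPerm (P : Type*) [PartialOrder P] [Fintype P] : Equiv.Perm (P → ℝ) where
  toFun := ORmap
  invFun := ORinv
  left_inv := ORinv_ORmap
  right_inv := ORmap_ORinv

@[simp] lemma ORPerm_apply (g : P → ℝ) : ORPerm P g = ORmap g := rfl

lemma listComp_tauPL_coe (l : List P) :
    listComp (l.map tauPL) = ⇑((l.map tauPLPerm).prod) := by
  induction l with
  | nil => rfl
  | cons a t ih =>
    show tauPL a ∘ listComp (t.map tauPL) = ⇑(tauPLPerm a * (t.map tauPLPerm).prod)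
    rw [ih]
    rfl

lemma part1_perm (e : P) (cov : List P) (hnd : cov.Nodup) (hc : ∀ x, x ∈ cov ↔ x ⋖ e) :
    ORPerm P * ((cov.map tauPLPerm).prod * tauPLPerm e * (cov.map tauPLPerm).prod)
      = tPLPerm e * ORPerm P := by
  apply Equiv.ext
  intro g
  simp only [Equiv.Perm.mul_apply, ORPerm_apply, tauPLPerm_apply, tPLPerm_apply]
  have h1 := part1_fun e cov hnd hc g
  rw [listComp_tauPL_coe cov] at h1
  exact h1

lemma prod_map_eq_conj {G : Type*} [Group G] {ι : Type*} {σ : G} {A : ι → G} {f : ι → G}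
    (l : List ι) (h : ∀ i ∈ l, f i = σ⁻¹ * A i * σ) :
    (l.map f).prod = σ⁻¹ * (l.map A).prod * σ := by
  induction l with
  | nil => simp
  | cons a t ih =>
    simp only [List.map_cons, List.prod_cons, h a (List.mem_cons_self),
      ih (fun i hi => h i (List.mem_cons_of_mem a hi))]
    group

lemma part2_perm (cov : P → List P)
    (hcov : ∀ e : P, (cov e).Nodup ∧ ∀ x : P, x ∈ cov e ↔ x ⋖ e)
    (lext : P → List P) (hlext : ∀ e : P, IsLinExtListOn {x : P | x < e} (lext e)) :
    ∀ e : P, tauPLPerm e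
      = (ORPerm P)⁻¹ * (etaPLPerm (lext e) * tPLPerm e * (etaPLPerm (lext e))⁻¹)
          * ORPerm P := by
  intro e
  refine (IsWellFounded.wf (r := ((· < ·) : P → P → Prop))).induction
    (C := fun e => tauPLPerm e
      = (ORPerm P)⁻¹ * (etaPLPerm (lext e) * tPLPerm e * (etaPLPerm (lext e))⁻¹)
          * ORPerm P) e ?_
  intro e IH
  have hp1 := part1_perm e (cov e) (hcov e).1 (hcov e).2
  have hkey := key_identity e (cov e) (hcov e).1 (hcov e).2 lext hlext
  set W := ((cov e).map
    (fun i => etaPLPerm (P := P) (lext i) * tPLPerm i * (etaPLPerm (lext i))⁻¹)).prod with hW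
  have hτ : tauPLPerm e
      = (((cov e).map tauPLPerm).prod)⁻¹ * ((ORPerm P)⁻¹ * (tPLPerm e * ORPerm P))
          * (((cov e).map tauPLPerm).prod)⁻¹ := by
    rw [← hp1]; group
  have hCeq : (((cov e).map tauPLPerm).prod) = (ORPerm P)⁻¹ * W * ORPerm P := by
    rw [hW]
    exact prod_map_eq_conj (cov e) (fun i hi => IH i ((hcov e).2 i |>.mp hi).lt)
  rw [hτ, hCeq]
  calc ((ORPerm P)⁻¹ * W * ORPerm P)⁻¹ * ((ORPerm P)⁻¹ * (tPLPerm e * ORPerm P))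
        * ((ORPerm P)⁻¹ * W * ORPerm P)⁻¹
      = (ORPerm P)⁻¹ * (W⁻¹ * tPLPerm e * W⁻¹) * ORPerm P := by group
    _ = (ORPerm P)⁻¹ * (etaPLPerm (lext e) * tPLPerm e * (etaPLPerm (lext e))⁻¹)
          * ORPerm P := by rw [hkey]

theorem part2_fun (cov : P → List P)
    (hcov : ∀ e : P, (cov e).Nodup ∧ ∀ x : P, x ∈ cov e ↔ x ⋖ e)
    (lext : P → List P) (hlext : ∀ e : P, IsLinExtListOn {x : P | x < e} (lext e))
    (e : P) (g : P → ℝ) :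
    ORmap (tauPL e g)
      = (etaPLPerm (lext e) * tPLPerm e * (etaPLPerm (lext e))⁻¹) (ORmap g) := by
  have h := part2_perm cov hcov lext hlext e
  have h2 : ORPerm P * tauPLPerm e
      = (etaPLPerm (lext e) * tPLPerm e * (etaPLPerm (lext e))⁻¹) * ORPerm P := by
    rw [h]; group
  have h3 := DFunLike.congr_fun h2 g
  simp only [Equiv.Perm.mul_apply, ORPerm_apply, tauPLPerm_apply] at h3 ⊢
  exact h3

end PartTwo
section Membership
set_option linter.unusedSectionVars false

variable {P : Type*} [PartialOrder P] [Fintype P]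

lemma exists_sat_chain {y : P} : ∀ {x : P}, x ≤ y →
    ∃ c : List P, c.Chain' (· ⋖ ·) ∧ c.head? = some x ∧ c.getLast? = some y := by
  intro x
  refine (IsWellFounded.wf (r := ((· > ·) : P → P → Prop))).induction
    (C := fun x => x ≤ y →
      ∃ c : List P, c.Chain' (· ⋖ ·) ∧ c.head? = some x ∧ c.getLast? = some y) x ?_
  intro x IH hxy
  rcases eq_or_lt_of_le hxy with rfl | hlt
  · exact ⟨[x], List.isChain_singleton x, rfl, rfl⟩
  · obtain ⟨z, hz, hzy⟩ := exists_covBy_le hlt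
    obtain ⟨c, hch, hhd, hlast⟩ := IH z hz.lt hzy
    refine ⟨x :: c, ?_, rfl, ?_⟩
    · rw [eq_cons_head hhd] at hch ⊢
      exact List.isChain_cons_cons.mpr ⟨hz, hch⟩
    · rw [show x :: c = [x] ++ c from rfl, List.getLast?_append, hlast]; rfl

lemma ORmap_mem_OR {g : P → ℝ} (hg : InChainPolytope P g) : InORPolytope P (ORmap g) := by
  obtain ⟨hg0, hg1⟩ := hg
  constructor
  · intro x
    constructor
    · obtain ⟨l, hl, heq⟩ := finSup_mem ((maxChainsFrom_finite x).image _)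
        ((maxChainsFrom_nonempty x).image _)
      rw [ORmap, ← heq]
      exact sum_map_nonneg hg0 l
    · refine csSup_le ((maxChainsFrom_nonempty x).image _) ?_
      rintro v ⟨l, hl, rfl⟩
      exact hg1 l (chain'_lt_of_covBy hl.1)
  · intro x y hxy
    rw [ORmap, ORmap]
    refine csSup_le ((maxChainsFrom_nonempty y).image _) ?_
    rintro v ⟨l, hl, rfl⟩
    obtain ⟨c, hch, hhd, hlast⟩ := exists_sat_chain hxy
    obtain ⟨hch', hhd', hlast', hsum⟩ := glue_chain hch hl.1 hlast hl.2.1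
    have hmem : c ++ l.tail ∈ maxChainsFrom x := by
      obtain ⟨z, hz, hzmax⟩ := hl.2.2
      exact ⟨hch', by rw [hhd', hhd], z, by rw [hlast', hz], hzmax⟩
    have h1 : g y ≤ (c.map g).sum := single_le_map_sum hg0 (mem_of_getLast? hlast)
    refine le_trans ?_ (le_finSup ((maxChainsFrom_finite x).image _)
      ⟨c ++ l.tail, hmem, rfl⟩)
    dsimp only
    rw [hsum g]
    linarith

lemma upSet_vals {f : P → ℝ} (hb : ∀ x : P, 0 ≤ f x ∧ f x ≤ 1) {x : P} {v : ℝ}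
    (hv : v ∈ {v : ℝ | ∃ y : PHat P, toHat x ⋖ y ∧ v = hatOR f y}) : 0 ≤ v ∧ v ≤ 1 := by
  obtain ⟨y, hy, rfl⟩ := hv
  induction y using WithBot.recBotCoe with
  | bot => exact ⟨zero_le_one, le_refl 1⟩
  | coe w =>
    induction w using WithTop.recTopCoe with
    | top => exact ⟨le_refl 0, zero_le_one⟩
    | coe z => exact hb z

lemma lowSet_vals {f : P → ℝ} (hb : ∀ x : P, 0 ≤ f x ∧ f x ≤ 1) {x : P} {v : ℝ}
    (hv : v ∈ {v : ℝ | ∃ y : PHat P, y ⋖ toHat x ∧ v = hatOR f y}) : 0 ≤ v ∧ v ≤ 1 := by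
  obtain ⟨y, hy, rfl⟩ := hv
  induction y using WithBot.recBotCoe with
  | bot => exact ⟨zero_le_one, le_refl 1⟩
  | coe w =>
    induction w using WithTop.recTopCoe with
    | top => exact ⟨le_refl 0, zero_le_one⟩
    | coe z => exact hb z

lemma upSet_le_self {f : P → ℝ} (hf : InORPolytope P f) (x : P) :
    sSup {v : ℝ | ∃ y : PHat P, toHat x ⋖ y ∧ v = hatOR f y} ≤ f x := by
  refine csSup_le (upSet_nonempty f x) ?_
  rintro v ⟨y, hy, rfl⟩
  induction y using WithBot.recBotCoe with
  | bot => exact absurd hy not_toHat_covBy_bot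
  | coe w =>
    induction w using WithTop.recTopCoe with
    | top => exact (hf.1 x).1
    | coe z => exact hf.2 (toHat_covBy_toHat.mp hy).lt.le

lemma self_le_lowInf {f : P → ℝ} (hf : InORPolytope P f) (x : P) :
    f x ≤ sInf {v : ℝ | ∃ y : PHat P, y ⋖ toHat x ∧ v = hatOR f y} := by
  refine le_csInf (lowSet_nonempty f x) ?_
  rintro v ⟨y, hy, rfl⟩
  induction y using WithBot.recBotCoe with
  | bot => exact (hf.1 x).2
  | coe w =>
    induction w using WithTop.recTopCoe with
    | top => exact absurd hy not_top_covBy_toHat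
    | coe z => exact hf.2 (toHat_covBy_toHat.mp hy).lt.le

lemma le_upSet_of_lt {f : P → ℝ} (hf : InORPolytope P f) {e y : P} (h : e < y) :
    f y ≤ sSup {v : ℝ | ∃ z : PHat P, toHat e ⋖ z ∧ v = hatOR f z} := by
  obtain ⟨z, hz, hzy⟩ := exists_covBy_le h
  exact le_trans (hf.2 hzy)
    (le_finSup (upSet_finite f e) ⟨toHat z, toHat_covBy_toHat.mpr hz, rfl⟩)

lemma lowInf_le_of_lt {f : P → ℝ} (hf : InORPolytope P f) {e x : P} (h : x < e) :
    sInf {v : ℝ | ∃ z : PHat P, z ⋖ toHat e ∧ v = hatOR f z} ≤ f x := by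
  obtain ⟨z, hxz, hz⟩ := exists_le_covBy h
  exact le_trans (finInf_le (lowSet_finite f e) ⟨toHat z, toHat_covBy_toHat.mpr hz, rfl⟩)
    (hf.2 hxz)

lemma ORinv_mem_C {f : P → ℝ} (hf : InORPolytope P f) : InChainPolytope P (ORinv f) := by
  have hlb : ∀ x : P, 0 ≤ sSup {v : ℝ | ∃ y : PHat P, toHat x ⋖ y ∧ v = hatOR f y} := by
    intro x
    have hmem := finSup_mem (upSet_finite f x) (upSet_nonempty f x)
    exact (upSet_vals hf.1 hmem).1
  constructor
  · intro x
    have h1 := upSet_le_self hf x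
    simp only [ORinv]
    linarith
  · have key : ∀ l : List P, l.Chain' (· < ·) → ∀ a, l.head? = some a →
        (l.map (ORinv f)).sum ≤ f a := by
      intro l
      induction l with
      | nil => intro _ a ha; simp at ha
      | cons b t ih =>
        intro hch a ha
        have hab : a = b := by
          simp only [List.head?_cons, Option.some.injEq] at ha
          exact ha.symm
        subst hab
        cases t with
        | nil =>
          simp only [List.map_cons, List.map_nil, List.sum_cons, List.sum_nil, add_zero]
          have := hlb a
          simp only [ORinv]
          linarith
        | cons c t' =>
          have hbc : a < c := (List.isChain_cons_cons.mp hch).1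
          have h2 := ih (List.isChain_cons_cons.mp hch).2 c rfl
          have hfc : f c ≤ sSup {v : ℝ | ∃ y : PHat P, toHat a ⋖ y ∧ v = hatOR f y} :=
            le_upSet_of_lt hf hbc
          simp only [List.map_cons, List.sum_cons] at h2 ⊢
          simp only [ORinv] at h2 ⊢
          linarith
    intro l hl
    cases l with
    | nil => simp
    | cons a t =>
      have h := key (a :: t) hl a rfl
      have h2 := (hf.1 a).2
      linarith

lemma tPL_mem_OR {f : P → ℝ} (hf : InORPolytope P f) (e : P) :
    InORPolytope P (tPL e f) := by
  set U := sSup {v : ℝ | ∃ y : PHat P, toHat e ⋖ y ∧ v = hatOR f y} with hU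
  set L := sInf {v : ℝ | ∃ y : PHat P, y ⋖ toHat e ∧ v = hatOR f y} with hL
  have hU0 : 0 ≤ U := (upSet_vals hf.1 (finSup_mem (upSet_finite f e) (upSet_nonempty f e))).1
  have hL1 : L ≤ 1 := (lowSet_vals hf.1 (finInf_mem (lowSet_finite f e) (lowSet_nonempty f e))).2
  have hUf : U ≤ f e := upSet_le_self hf e
  have hfL : f e ≤ L := self_le_lowInf hf e
  have hval : tPL e f e = U + L - f e := by
    simp only [tPL]
    rw [Function.update_self, ← hU, ← hL]
  have hother : ∀ x : P, x ≠ e → tPL e f x = f x := fun x hx =>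
    Function.update_of_ne hx _ _
  constructor
  · intro x
    by_cases hx : x = e
    · subst hx
      rw [hval]
      constructor <;> linarith
    · rw [hother x hx]; exact hf.1 x
  · intro x y hxy
    by_cases hx : x = e <;> by_cases hy : y = e
    · subst hx; subst hy; exact le_refl _
    · subst hx
      have hlt : x < y := lt_of_le_of_ne hxy (fun h => hy h.symm)
      rw [hval, hother y hy]
      have := le_upSet_of_lt hf hlt
      rw [← hU] at this
      linarith
    · subst hy
      have hlt : x < y := lt_of_le_of_ne hxy hx
      rw [hval, hother x hx]
      have := lowInf_le_of_lt hf hlt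
      rw [← hL] at this
      linarith
    · rw [hother x hx, hother y hy]
      exact hf.2 hxy

lemma sat_refine {g : P → ℝ} (hg0 : ∀ x, 0 ≤ g x) :
    ∀ c : List P, c.Chain' (· < ·) → c ≠ [] →
      ∃ c' : List P, c'.Chain' (· ⋖ ·) ∧ c'.head? = c.head? ∧ c'.getLast? = c.getLast?
        ∧ (c.map g).sum ≤ (c'.map g).sum := by
  intro c
  induction c with
  | nil => intro _ h; exact absurd rfl h
  | cons a t ih =>
    intro hch _
    cases t with
    | nil => exact ⟨[a], List.isChain_singleton a, rfl, rfl, le_refl _⟩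
    | cons b t' =>
      obtain ⟨c'', hch'', hhd'', hlast'', hsum''⟩ :=
        ih (List.isChain_cons_cons.mp hch).2 (List.cons_ne_nil b t')
      have hab : a < b := (List.isChain_cons_cons.mp hch).1
      obtain ⟨s, hs, hshd, hslast⟩ := exists_sat_chain hab.le
      have hhd''' : c''.head? = some b := by rw [hhd'']; rfl
      obtain ⟨hgch, hghd, hglast, hgsum⟩ := glue_chain hs hch'' hslast hhd'''
      refine ⟨s ++ c''.tail, hgch, by rw [hghd, hshd]; rfl, by rw [hglast, hlast'']; rfl, ?_⟩
      rw [hgsum g]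
      have hsum_s : g a + g b ≤ (s.map g).sum := by
        by_cases hab' : a = b
        · exact absurd hab (by rw [hab']; exact lt_irrefl b)
        · exact pair_le_map_sum hg0 (mem_of_head? hshd) (mem_of_getLast? hslast) hab'
      simp only [List.map_cons, List.sum_cons] at hsum'' ⊢
      linarith

lemma chain_sum_le_Mval {g : P → ℝ} (hg0 : ∀ x, 0 ≤ g x) {e : P} {l : List P}
    (hl : l.Chain' (· < ·)) (he : e ∈ l) : (l.map g).sum ≤ Mval g e := by
  obtain ⟨s, t, rfl⟩ := List.append_of_mem he
  have hsplit := List.isChain_split.mp hl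
  -- refine both parts
  obtain ⟨c₁', h1ch, h1hd, h1last, h1sum⟩ := sat_refine hg0 (s ++ [e]) hsplit.1 (by simp)
  obtain ⟨c₂', h2ch, h2hd, h2last, h2sum⟩ := sat_refine hg0 (e :: t) hsplit.2 (by simp)
  rw [List.getLast?_concat] at h1last
  have h2hd' : c₂'.head? = some e := by rw [h2hd]; rfl
  -- extend bottom
  have h1hd' : ∃ a, c₁'.head? = some a := by
    cases c₁' with
    | nil => simp at h1last
    | cons p q => exact ⟨p, rfl⟩
  obtain ⟨a, ha⟩ := h1hd'
  obtain ⟨mch, hm⟩ := maxChainsTo_nonempty a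
  obtain ⟨hmch, hmhd, hmlast, hmsum⟩ := glue_chain hm.1 h1ch hm.2.2 ha
  have hC1 : mch ++ c₁'.tail ∈ maxChainsTo e := by
    obtain ⟨a0, ha0, ha0min⟩ := hm.2.1
    exact ⟨hmch, ⟨a0, by rw [hmhd, ha0], ha0min⟩, by rw [hmlast, h1last]⟩
  have hC1sum : (c₁'.map g).sum ≤ ((mch ++ c₁'.tail).map g).sum := by
    rw [hmsum g]
    have := single_le_map_sum hg0 (mem_of_getLast? hm.2.2)
    linarith
  -- extend top
  have h2last' : ∃ z, c₂'.getLast? = some z := by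
    cases hc2 : c₂' with
    | nil => rw [hc2] at h2hd'; simp at h2hd'
    | cons p q => exact ⟨(p :: q).getLast (List.cons_ne_nil p q), List.getLast?_eq_getLast _⟩
  obtain ⟨z, hz⟩ := h2last'
  obtain ⟨fch, hfm⟩ := maxChainsFrom_nonempty z
  obtain ⟨hfch, hfhd, hflast, hfsum⟩ := glue_chain h2ch hfm.1 hz hfm.2.1
  have hC2 : c₂' ++ fch.tail ∈ maxChainsFrom e := by
    obtain ⟨z0, hz0, hz0max⟩ := hfm.2.2
    exact ⟨hfch, by rw [hfhd, h2hd'], z0, by rw [hflast, hz0], hz0max⟩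
  have hC2sum : (c₂'.map g).sum ≤ ((c₂' ++ fch.tail).map g).sum := by
    rw [hfsum g]
    have := single_le_map_sum hg0 (mem_of_head? hfm.2.1)
    linarith
  -- glue the two
  obtain ⟨hmem, hsum⟩ := glue_mem_maxChainsThru hC1 hC2
  refine le_trans ?_ (le_finSup ((maxChainsThru_finite e).image _)
    ⟨(mch ++ c₁'.tail) ++ (c₂' ++ fch.tail).tail, hmem, rfl⟩)
  dsimp only
  rw [hsum g]
  have hls : ((s ++ e :: t).map g).sum = ((s ++ [e]).map g).sum + ((e :: t).map g).sum - g e := by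
    simp [List.sum_append]
    ring
  rw [hls]
  linarith

lemma Mval_le_one {g : P → ℝ} (hg : InChainPolytope P g) (e : P) : Mval g e ≤ 1 := by
  refine csSup_le ((maxChainsThru_nonempty e).image _) ?_
  rintro v ⟨l, hl, rfl⟩
  exact hg.2 l (chain'_lt_of_covBy hl.1)

lemma tauPL_mem_C {g : P → ℝ} (hg : InChainPolytope P g) (e : P) :
    InChainPolytope P (tauPL e g) := by
  have hM1 : Mval g e ≤ 1 := Mval_le_one hg e
  constructor
  · intro x
    by_cases hx : x = e
    · subst hx
      rw [tauPL_eq, Function.update_self]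
      linarith
    · rw [tauPL_eq, Function.update_of_ne hx]
      exact hg.1 x
  · intro l hl
    by_cases he : e ∈ l
    · have hnd : l.Nodup := nodup_of_chain'_lt hl
      rw [tauPL_eq, sum_map_update_mem hnd he]
      have h1 := chain_sum_le_Mval hg.1 hl he
      have h2 := hg.1 e
      linarith
    · rw [tauPL_eq, map_update_of_not_mem he]
      exact hg.2 l hl

end Membership
section PartThree
set_option linter.unusedSectionVars false

variable {P : Type*} [PartialOrder P] [Fintype P]

lemma tORSub_coe (e : P) (f : ORSub P) : (tORSub e f).1 = tPL e f.1 := by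
  rw [tORSub, dif_pos (tPL_mem_OR f.2 e)]

lemma tauCSub_coe (e : P) (g : CPSub P) : (tauCSub e g).1 = tauPL e g.1 := by
  rw [tauCSub, dif_pos ⟨tauPL_mem_C g.2 e, tauPL_invol e g.1⟩]

lemma tORPerm_coe (e : P) (f : ORSub P) : (tORPerm e f).1 = tPL e f.1 := tORSub_coe e f

lemma tauCPerm_coe (e : P) (g : CPSub P) : (tauCPerm e g).1 = tauPL e g.1 := tauCSub_coe e g

lemma tORPerm_inv (e : P) : (tORPerm (P := P) e)⁻¹ = tORPerm e := Equiv.ext fun _ => rfl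

lemma tauCPerm_inv (e : P) : (tauCPerm (P := P) e)⁻¹ = tauCPerm e := Equiv.ext fun _ => rfl

lemma tPLPerm_inv (e : P) : (tPLPerm (P := P) e)⁻¹ = tPLPerm e := Equiv.ext fun _ => rfl

lemma etaORPerm_cons (a : P) (t : List P) :
    etaORPerm (P := P) (a :: t) = tORPerm a * etaORPerm t := by
  unfold etaORPerm
  rw [List.map_cons, List.prod_cons]

lemma etaCPerm_cons (a : P) (t : List P) :
    etaCPerm (P := P) (a :: t) = tauCPerm a * etaCPerm t := by
  unfold etaCPerm
  rw [List.map_cons, List.prod_cons]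

lemma etaPLPerm_cons (a : P) (t : List P) :
    etaPLPerm (P := P) (a :: t) = tPLPerm a * etaPLPerm t := by
  unfold etaPLPerm
  rw [List.map_cons, List.prod_cons]

lemma etaORPerm_coe (l : List P) : ∀ f : ORSub P, (etaORPerm l f).1 = etaPLPerm l f.1 := by
  induction l with
  | nil => intro f; rfl
  | cons a t ih =>
    intro f
    rw [etaORPerm_cons, etaPLPerm_cons]
    simp only [Equiv.Perm.mul_apply]
    rw [tORPerm_coe, ih f]
    rfl

lemma etaCPerm_coe (l : List P) : ∀ g : CPSub P,
    (etaCPerm l g).1 = ((l.map tauPLPerm).prod) g.1 := by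
  induction l with
  | nil => intro g; rfl
  | cons a t ih =>
    intro g
    rw [etaCPerm_cons, List.map_cons, List.prod_cons]
    simp only [Equiv.Perm.mul_apply]
    rw [tauCPerm_coe, ih g]
    rfl

lemma etaORPerm_inv_eq (l : List P) : (etaORPerm (P := P) l)⁻¹ = etaORPerm l.reverse := by
  unfold etaORPerm
  rw [List.prod_inv_reverse, List.map_map,
    show (Inv.inv ∘ tORPerm : P → Equiv.Perm (ORSub P)) = tORPerm from
      funext fun e => tORPerm_inv e,
    ← List.map_reverse]

lemma etaPLPerm_inv_eq (l : List P) : (etaPLPerm (P := P) l)⁻¹ = etaPLPerm l.reverse := by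
  unfold etaPLPerm
  rw [List.prod_inv_reverse, List.map_map,
    show (Inv.inv ∘ tPLPerm : P → Equiv.Perm (P → ℝ)) = tPLPerm from
      funext fun e => tPLPerm_inv e,
    ← List.map_reverse]

lemma etaORPerm_inv_coe (l : List P) (f : ORSub P) :
    ((etaORPerm l)⁻¹ f).1 = (etaPLPerm l)⁻¹ f.1 := by
  rw [etaORPerm_inv_eq, etaPLPerm_inv_eq]
  exact etaORPerm_coe l.reverse f

/-- The transfer map as an equivalence between the two polytopes. -/
noncomputable def OREquiv (P : Type*) [PartialOrder P] [Fintype P] : CPSub P ≃ ORSub P where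
  toFun g := ⟨ORmap g.1, ORmap_mem_OR g.2⟩
  invFun f := ⟨ORinv f.1, ORinv_mem_C f.2⟩
  left_inv g := Subtype.ext (ORinv_ORmap g.1)
  right_inv f := Subtype.ext (ORmap_ORinv f.1)

/-- Conjugation by the transfer map, as an isomorphism of permutation groups. -/
noncomputable def conjE (P : Type*) [PartialOrder P] [Fintype P] :
    Equiv.Perm (CPSub P) ≃* Equiv.Perm (ORSub P) where
  toFun σ := ((OREquiv P).symm.trans σ).trans (OREquiv P)
  invFun σ := ((OREquiv P).trans σ).trans (OREquiv P).symm
  left_inv σ := by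
    ext g
    simp [Equiv.trans_apply]
  right_inv σ := by
    ext f
    simp [Equiv.trans_apply]
  map_mul' σ τ := by
    ext f
    simp [Equiv.trans_apply, Equiv.Perm.mul_apply]

lemma conjE_apply_coe (σ : Equiv.Perm (CPSub P)) (f : ORSub P) :
    (conjE P σ f).1 = ORmap ((σ ⟨ORinv f.1, ORinv_mem_C f.2⟩).1) := rfl

lemma part3a (cov : P → List P)
    (hcov : ∀ e : P, (cov e).Nodup ∧ ∀ x : P, x ∈ cov e ↔ x ⋖ e)
    (lext : P → List P) (hlext : ∀ e : P, IsLinExtListOn {x : P | x < e} (lext e)) (e : P) :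
    conjE P (tauCPerm e) = etaORPerm (lext e) * tORPerm e * (etaORPerm (lext e))⁻¹ := by
  apply Equiv.ext
  intro f
  apply Subtype.ext
  rw [conjE_apply_coe]
  rw [tauCPerm_coe]
  have h2 := part2_fun cov hcov lext hlext e (ORinv f.1)
  rw [ORmap_ORinv] at h2
  rw [h2]
  simp only [Equiv.Perm.mul_apply]
  rw [etaORPerm_coe]
  congr 1
  simp only [Equiv.Perm.mul_apply, tPLPerm_apply]
  rw [tORPerm_coe]
  exact congrArg (tPL e) (etaORPerm_inv_coe (lext e) f).symm

lemma part3b (cov : P → List P)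
    (hcov : ∀ e : P, (cov e).Nodup ∧ ∀ x : P, x ∈ cov e ↔ x ⋖ e) (e : P) :
    conjE P (etaCPerm (cov e) * tauCPerm e * etaCPerm (cov e)) = tORPerm e := by
  apply Equiv.ext
  intro f
  apply Subtype.ext
  rw [conjE_apply_coe]
  set g : CPSub P := ⟨ORinv f.1, ORinv_mem_C f.2⟩ with hg
  simp only [Equiv.Perm.mul_apply]
  rw [etaCPerm_coe, tauCPerm_coe, etaCPerm_coe]
  rw [← listComp_tauPL_coe]
  have h1 := part1_fun e (cov e) (hcov e).1 (hcov e).2 g.1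
  rw [h1]
  have hg1 : g.1 = ORinv f.1 := rfl
  rw [hg1, ORmap_ORinv, tORPerm_coe]

end PartThree

/-- `OR ∘ t_e^* = t_e ∘ OR` and `OR ∘ τ_e = τ_e^* ∘ OR` as maps `C(P) → OR(P)`, where
`t_e^* = τ_{e_1} ⋯ τ_{e_k} τ_e τ_{e_1} ⋯ τ_{e_k}` (over the elements `cov e` covered by
`e`) and `τ_e^* = η_e t_e η_e⁻¹` (with `η_e` the composition of the toggles `t_x` over a
linear extension `lext e` of `{x | x < e}`).  Consequently the map `τ_e ↦ τ_e^*` extends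
to a group isomorphism `Tog_C(P) ≃* Tog_OR(P)`, whose inverse sends `t_e ↦ t_e^*`. -/
theorem pl_toggle_commuting_diagrams_and_group_iso
    (P : Type*) [PartialOrder P] [Fintype P]
    (cov : P → List P) (hcov : ∀ e : P, (cov e).Nodup ∧ ∀ x : P, x ∈ cov e ↔ x ⋖ e)
    (lext : P → List P) (hlext : ∀ e : P, IsLinExtListOn {x : P | x < e} (lext e)) :
    (∀ (e : P) (g : P → ℝ), InChainPolytope P g →
      ORmap ((listComp ((cov e).map tauPL) ∘ tauPL e ∘ listComp ((cov e).map tauPL)) g)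
        = tPL e (ORmap g)) ∧
    (∀ (e : P) (g : P → ℝ), InChainPolytope P g →
      ORmap (tauPL e g)
        = (etaPLPerm (lext e) * tPLPerm e * (etaPLPerm (lext e))⁻¹) (ORmap g)) ∧
    ∃ φ : Subgroup.closure (Set.range (tauCPerm (P := P))) ≃*
        Subgroup.closure (Set.range (tORPerm (P := P))),
      (∀ e : P,
        (φ ⟨tauCPerm e, Subgroup.subset_closure ⟨e, rfl⟩⟩ : Equiv.Perm (ORSub P))
          = etaORPerm (lext e) * tORPerm e * (etaORPerm (lext e))⁻¹) ∧
      (∀ e : P,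
        (φ.symm ⟨tORPerm e, Subgroup.subset_closure ⟨e, rfl⟩⟩ : Equiv.Perm (CPSub P))
          = etaCPerm (cov e) * tauCPerm e * etaCPerm (cov e)) := by
  refine ⟨?_, ?_, ?_⟩
  · intro e g _
    exact part1_fun e (cov e) (hcov e).1 (hcov e).2 g
  · intro e g _
    exact part2_fun cov hcov lext hlext e g
  · have hetaOR_mem : ∀ l : List P,
        etaORPerm l ∈ Subgroup.closure (Set.range (tORPerm (P := P))) := by
      intro l
      induction l with
      | nil =>
        have h1 : etaORPerm (P := P) [] = 1 := rfl
        rw [h1]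
        exact Subgroup.one_mem _
      | cons a t ih =>
        rw [etaORPerm_cons]
        exact mul_mem (Subgroup.subset_closure ⟨a, rfl⟩) ih
    have hetaC_mem : ∀ l : List P,
        etaCPerm l ∈ Subgroup.closure (Set.range (tauCPerm (P := P))) := by
      intro l
      induction l with
      | nil =>
        have h1 : etaCPerm (P := P) [] = 1 := rfl
        rw [h1]
        exact Subgroup.one_mem _
      | cons a t ih =>
        rw [etaCPerm_cons]
        exact mul_mem (Subgroup.subset_closure ⟨a, rfl⟩) ih
    have hgen1 : ∀ e : P,
        conjE P (tauCPerm e) ∈ Subgroup.closure (Set.range (tORPerm (P := P))) := by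
      intro e
      rw [part3a cov hcov lext hlext e]
      exact mul_mem (mul_mem (hetaOR_mem _) (Subgroup.subset_closure ⟨e, rfl⟩))
        (inv_mem (hetaOR_mem _))
    have hgen2 : ∀ e : P,
        (conjE P).symm (tORPerm e) ∈ Subgroup.closure (Set.range (tauCPerm (P := P))) := by
      intro e
      rw [← part3b cov hcov e, MulEquiv.symm_apply_apply]
      exact mul_mem (mul_mem (hetaC_mem _) (Subgroup.subset_closure ⟨e, rfl⟩)) (hetaC_mem _)
    have hmem1 : ∀ σ ∈ Subgroup.closure (Set.range (tauCPerm (P := P))),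
        conjE P σ ∈ Subgroup.closure (Set.range (tORPerm (P := P))) := by
      intro σ hσ
      induction hσ using Subgroup.closure_induction with
      | mem x hx => obtain ⟨e, rfl⟩ := hx; exact hgen1 e
      | one => rw [map_one]; exact Subgroup.one_mem _
      | mul x y hx hy ihx ihy => rw [map_mul]; exact mul_mem ihx ihy
      | inv x hx ihx => rw [map_inv]; exact inv_mem ihx
    have hmem2 : ∀ σ ∈ Subgroup.closure (Set.range (tORPerm (P := P))),
        (conjE P).symm σ ∈ Subgroup.closure (Set.range (tauCPerm (P := P))) := by
      intro σ hσ
      induction hσ using Subgroup.closure_induction with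
      | mem x hx => obtain ⟨e, rfl⟩ := hx; exact hgen2 e
      | one => rw [map_one]; exact Subgroup.one_mem _
      | mul x y hx hy ihx ihy => rw [map_mul]; exact mul_mem ihx ihy
      | inv x hx ihx => rw [map_inv]; exact inv_mem ihx
    refine ⟨{ toFun := fun x => ⟨conjE P x.1, hmem1 x.1 x.2⟩,
              invFun := fun y => ⟨(conjE P).symm y.1, hmem2 y.1 y.2⟩,
              left_inv := fun x => Subtype.ext (MulEquiv.symm_apply_apply _ _),
              right_inv := fun y => Subtype.ext (MulEquiv.apply_symm_apply _ _),
              map_mul' := fun x y => Subtype.ext (by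
                simp only [Subgroup.coe_mul]
                exact map_mul (conjE P) x.1 y.1) }, ?_, ?_⟩
    · intro e
      show conjE P (tauCPerm e) = _
      exact part3a cov hcov lext hlext e
    · intro e
      show (conjE P).symm (tORPerm e) = _
      rw [← part3b cov hcov e, MulEquiv.symm_apply_apply]
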